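/- arXiv:2603.10309 — 12 statements merged into one kernel-verified Lean document; each statement's English description precedes it below -/
import Mathlib

section
/- Let f : {0,1}^n → ℝ satisfy f(v_I) ≠ 0 for every I ⊆ [n] with |I| ≤ t. Then the functions {x_I · f : |I| ≤ t} are linearly independent in the space of real-valued functions on {0,1}^n. -/
/-- The monomial function `x_I` on the Boolean cube (identified with subsets of `[n]`
via characteristic vectors): `x_I(v_J) = ∏_{i∈I} (v_J)_i`. -/
def xI {n : ℕ} (I : Finset (Fin n)) : Finset (Fin n) → ℝ :=
  fun J => ∏ i ∈ I, (if i ∈ J then (1 : ℝ) else 0)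

lemma xI_eq {n : ℕ} (I J : Finset (Fin n)) : xI I J = if I ⊆ J then 1 else 0 := by
  unfold xI
  by_cases h : I ⊆ J
  · rw [if_pos h]
    exact Finset.prod_eq_one (fun i hi => by simp [h hi])
  · rw [if_neg h]
    obtain ⟨i, hi, hij⟩ := Finset.not_subset.mp h
    exact Finset.prod_eq_zero hi (by simp [hij])

/-- Alon–Babai–Suzuki independence lemma: if `f` is nonzero on all characteristic
vectors of sets of size at most `t`, then the functions `x_I · f` for `|I| ≤ t`
are linearly independent. -/
theorem stmt1 (n t : ℕ) (f : Finset (Fin n) → ℝ)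
    (hf : ∀ I : Finset (Fin n), I.card ≤ t → f I ≠ 0) :
    LinearIndependent ℝ
      (fun I : {I : Finset (Fin n) // I.card ≤ t} =>
        (fun J => xI I.1 J * f J : Finset (Fin n) → ℝ)) := by
  rw [linearIndependent_iff']
  intro s g hsum
  suffices H : ∀ m (i : {I : Finset (Fin n) // I.card ≤ t}), i ∈ s → i.1.card = m → g i = 0 by
    intro i hi; exact H i.1.card i hi rfl
  intro m
  induction m using Nat.strong_induction_on with
  | _ m ih =>
    intro i hi hcard
    have h0 := congrFun hsum i.1
    simp only [Finset.sum_apply, Pi.smul_apply, smul_eq_mul, Pi.zero_apply] at h0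
    have hz : ∀ i' ∈ s, i' ≠ i → g i' * (xI i'.1 i.1 * f i.1) = 0 := by
      intro i' hi' hne
      by_cases hsub : i'.1 ⊆ i.1
      · have hss : i'.1 ⊂ i.1 := hsub.ssubset_of_ne (fun he => hne (Subtype.ext he))
        have hlt : i'.1.card < m := hcard ▸ Finset.card_lt_card hss
        rw [ih _ hlt i' hi' rfl, zero_mul]
      · simp [xI_eq, hsub]
    rw [Finset.sum_eq_single i hz (fun h => absurd hi h)] at h0
    rw [xI_eq, if_pos (subset_refl _), one_mul] at h0
    rcases mul_eq_zero.mp h0 with h | h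
    · exact h
    · exact absurd h (hf i.1 i.2)
end

section
/- Let f : {0,1}^n → ℝ satisfy f(v_I) ≠ 0 for every I ⊆ [n] with |I| ≤ t, and let 𝒥 ⊆ 2^[n] be a family with |J| > t for all J ∈ 𝒥. Then the functions {x_I f : |I| ≤ t} ∪ {x_J : J ∈ 𝒥} are linearly independent in ℝ^{{0,1}^n}. -/
lemma xI_eval {n : ℕ} (I X : Finset (Fin n)) : xI I X = if I ⊆ X then 1 else 0 := by
  unfold xI
  split
  · exact Finset.prod_eq_one (fun i hi => by simp [*, ‹I ⊆ X› hi])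
  · obtain ⟨i, hi, hix⟩ := Finset.not_subset.mp ‹¬ I ⊆ X›
    exact Finset.prod_eq_zero hi (by simp [hix])

/-- If `f` is nonzero on all characteristic vectors of sets of size at most `t`,
and `𝒥` is a family of sets of size `> t`, then
`{x_I f : |I| ≤ t} ∪ {x_J : J ∈ 𝒥}` is linearly independent. -/
theorem stmt2 (n t : ℕ) (f : Finset (Fin n) → ℝ)
    (hf : ∀ I : Finset (Fin n), I.card ≤ t → f I ≠ 0)
    (𝒥 : Finset (Finset (Fin n))) (h𝒥 : ∀ J ∈ 𝒥, t < J.card) :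
    LinearIndependent ℝ
      (Sum.elim
        (fun I : {I : Finset (Fin n) // I.card ≤ t} =>
          (fun X => xI I.1 X * f X : Finset (Fin n) → ℝ))
        (fun J : {J : Finset (Fin n) // J ∈ 𝒥} => xI J.1)) := by
  rw [Fintype.linearIndependent_iff]
  intro g hg
  -- evaluate the relation at a point X
  have heval : ∀ X : Finset (Fin n),
      (∑ I : {I : Finset (Fin n) // I.card ≤ t},
        g (Sum.inl I) * ((if I.1 ⊆ X then (1:ℝ) else 0) * f X)) +
      (∑ J : {J : Finset (Fin n) // J ∈ 𝒥},
        g (Sum.inr J) * (if J.1 ⊆ X then (1:ℝ) else 0)) = 0 := by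
    intro X
    have h := congrFun hg X
    simpa [Fintype.sum_sum_type, Finset.sum_apply, Pi.smul_apply, smul_eq_mul,
      xI_eval] using h
  have hA : ∀ I : Finset (Fin n), ∀ hI : I.card ≤ t, g (Sum.inl ⟨I, hI⟩) = 0 := by
    intro I
    induction I using Finset.strongInduction with
    | _ I ih =>
      intro hI
      have h := heval I
      have h2 : (∑ J : {J : Finset (Fin n) // J ∈ 𝒥},
          g (Sum.inr J) * (if J.1 ⊆ I then (1:ℝ) else 0)) = 0 := by
        apply Finset.sum_eq_zero
        intro J _
        have hc : t < J.1.card := h𝒥 J.1 J.2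
        have : ¬ J.1 ⊆ I := fun hsub => by
          have := Finset.card_le_card hsub; omega
        simp [this]
      rw [h2, add_zero] at h
      have h1 : (∑ I' : {I : Finset (Fin n) // I.card ≤ t},
          g (Sum.inl I') * ((if I'.1 ⊆ I then (1:ℝ) else 0) * f I))
          = g (Sum.inl ⟨I, hI⟩) * f I := by
        rw [Finset.sum_eq_single (⟨I, hI⟩ : {I : Finset (Fin n) // I.card ≤ t})]
        · simp
        · intro I' _ hne
          by_cases hsub : I'.1 ⊆ I
          · have hss : I'.1 ⊂ I := by
              rcases hsub.ssubset_or_eq with hss | heq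
              · exact hss
              · exact absurd (Subtype.ext heq) hne
            rw [ih I'.1 hss I'.2]
            ring
          · simp [hsub]
        · intro habs
          exact absurd (Finset.mem_univ _) habs
      rw [h1] at h
      exact (mul_eq_zero.mp h).resolve_right (hf I hI)
  have hB : ∀ J : Finset (Fin n), ∀ hJ : J ∈ 𝒥, g (Sum.inr ⟨J, hJ⟩) = 0 := by
    intro J
    induction J using Finset.strongInduction with
    | _ J ih =>
      intro hJ
      have h := heval J
      have h1 : (∑ I' : {I : Finset (Fin n) // I.card ≤ t},
          g (Sum.inl I') * ((if I'.1 ⊆ J then (1:ℝ) else 0) * f J)) = 0 :=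
        Finset.sum_eq_zero fun I' _ => by rw [hA I'.1 I'.2]; ring
      rw [h1, zero_add] at h
      have h2 : (∑ J' : {J : Finset (Fin n) // J ∈ 𝒥},
          g (Sum.inr J') * (if J'.1 ⊆ J then (1:ℝ) else 0))
          = g (Sum.inr ⟨J, hJ⟩) := by
        rw [Finset.sum_eq_single (⟨J, hJ⟩ : {J : Finset (Fin n) // J ∈ 𝒥})]
        · simp
        · intro J' _ hne
          by_cases hsub : J'.1 ⊆ J
          · rcases hsub.ssubset_or_eq with hss | heq
            · rw [ih J'.1 hss J'.2]; ring
            · exact absurd (Subtype.ext heq) hne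
          · simp [hsub]
        · intro habs
          exact absurd (Finset.mem_univ _) habs
      rw [h2] at h
      exact h
  rintro (⟨I, hI⟩ | ⟨J, hJ⟩)
  · exact hA I hI
  · exact hB J hJ
end

section
/- Let ℱ = {A_1,…,A_m} be an L-intersecting family of subsets of [n] ordered so that |A_1| ≤ ⋯ ≤ |A_m|, where L ⊆ ℤ_{≥0}. Define f_i(x) = ∏_{ℓ∈L, ℓ<|A_i|} (v_{A_i}·x − ℓ). Then f_i evaluated at the characteristic vector of A_i is nonzero, and f_i evaluated at the characteristic vector of A_j is zero for all j < i. Consequently f_1,…,f_m are linearly independent. -/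
/-- The triangular property of the ABS polynomials `f_i` associated to an
`L`-intersecting family `A_1, …, A_m` ordered by size, and their linear independence. -/
theorem stmt4 (n m : ℕ) (L : Finset ℕ) (A : Fin m → Finset (Fin n))
    (hinj : Function.Injective A)
    (hmono : ∀ i j : Fin m, i ≤ j → (A i).card ≤ (A j).card)
    (hint : ∀ i j : Fin m, i ≠ j → (A i ∩ A j).card ∈ L) :
    let fi : Fin m → Finset (Fin n) → ℝ := fun i X =>
      ∏ ℓ ∈ L.filter (fun ℓ => ℓ < (A i).card),
        ((∑ j ∈ A i, (if j ∈ X then (1 : ℝ) else 0)) - ℓ)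
    (∀ i, fi i (A i) ≠ 0) ∧ (∀ i j : Fin m, j < i → fi i (A j) = 0) ∧
      LinearIndependent ℝ fi := by
  intro fi
  have hsum : ∀ (i : Fin m) (X : Finset (Fin n)),
      (∑ j ∈ A i, (if j ∈ X then (1 : ℝ) else 0)) = ((A i ∩ X).card : ℝ) := by
    intro i X
    rw [Finset.sum_boole, Finset.filter_mem_eq_inter]
  have h1 : ∀ i, fi i (A i) ≠ 0 := by
    intro i
    simp only [fi]
    rw [Finset.prod_ne_zero_iff]
    intro ℓ hℓ
    rw [Finset.mem_filter] at hℓ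
    rw [hsum, Finset.inter_self]
    have : (ℓ : ℝ) < ((A i).card : ℝ) := by exact_mod_cast hℓ.2
    intro h
    rw [sub_eq_zero] at h
    exact absurd h (by exact_mod_cast hℓ.2.ne')
  have h2 : ∀ i j : Fin m, j < i → fi i (A j) = 0 := by
    intro i j hji
    have hne : i ≠ j := (ne_of_gt hji)
    have hcard : (A i ∩ A j).card < (A i).card := by
      have hle : (A i ∩ A j).card ≤ (A i).card :=
        Finset.card_le_card (Finset.inter_subset_left)
      rcases lt_or_eq_of_le hle with h | h
      · exact h
      · exfalso
        have hsub : A i ⊆ A j := by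
          have := Finset.eq_of_subset_of_card_le Finset.inter_subset_left h.ge
          rw [← this]
          exact Finset.inter_subset_right
        have hcard2 : (A j).card ≤ (A i).card := hmono j i hji.le
        have : A i = A j := Finset.eq_of_subset_of_card_le hsub hcard2
        exact hne (hinj this)
    apply Finset.prod_eq_zero (i := (A i ∩ A j).card)
    · exact Finset.mem_filter.2 ⟨hint i j hne, hcard⟩
    · rw [hsum]; ring
  refine ⟨h1, h2, ?_⟩
  set M : Matrix (Fin m) (Fin m) ℝ := fun i j => fi i (A j) with hM
  have htri : M.BlockTriangular id := by
    intro i j hij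
    exact h2 i j hij
  have hdet : IsUnit M := by
    rw [Matrix.isUnit_iff_isUnit_det, Matrix.det_of_upperTriangular htri]
    exact isUnit_iff_ne_zero.2 (Finset.prod_ne_zero_iff.2 fun i _ => h1 i)
  have hrows : LinearIndependent ℝ (fun i => M i) :=
    Matrix.linearIndependent_rows_iff_isUnit.2 hdet
  have : (fun i => M i) = (fun i j => fi i (A j)) := rfl
  let φ : (Finset (Fin n) → ℝ) →ₗ[ℝ] (Fin m → ℝ) :=
    { toFun := fun g j => g (A j), map_add' := fun a b => rfl,
      map_smul' := fun c a => rfl }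
  exact LinearIndependent.of_comp φ hrows
end

section
/- Let K = {k_1,…,k_r} and L be a set of s nonnegative integers with k_i > s − r for every i. If ℱ ⊆ ⋃_{k∈K} C([n],k) is L-intersecting, then |ℱ| + Σ_{j=s−r+1}^{s} |𝒩_j(ℱ)| ≤ Σ_{i=s−r+1}^{s} C(n,i), where 𝒩_j(ℱ) is the set of j-subsets of [n] not contained in any member of ℱ. -/
open Finset

namespace ABSaux

variable {n : ℕ}

/-- Indicator of `T ⊆ S`: the multilinear monomial `x^T` as a function on subsets. -/
def e (T : Finset (Fin n)) : Finset (Fin n) → ℚ :=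
  fun S => if T ⊆ S then 1 else 0

/-- Span of monomials of degree at most `a`. -/
def M (n a : ℕ) : Submodule ℚ (Finset (Fin n) → ℚ) :=
  Submodule.span ℚ {f | ∃ T : Finset (Fin n), T.card ≤ a ∧ f = e T}

lemma e_mul (T T' : Finset (Fin n)) : e T * e T' = e (T ∪ T') := by
  funext S
  simp only [Pi.mul_apply, e, Finset.union_subset_iff]
  by_cases h1 : T ⊆ S <;> by_cases h2 : T' ⊆ S <;> simp [h1, h2]

lemma M_mono {a b : ℕ} (h : a ≤ b) : M n a ≤ M n b :=
  Submodule.span_mono (fun f ⟨T, hT, hf⟩ => ⟨T, hT.trans h, hf⟩)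

lemma e_mem {T : Finset (Fin n)} {a : ℕ} (h : T.card ≤ a) : e T ∈ M n a :=
  Submodule.subset_span ⟨T, h, rfl⟩

lemma mul_mem_M {a b : ℕ} {f g : Finset (Fin n) → ℚ} (hf : f ∈ M n a) (hg : g ∈ M n b) :
    f * g ∈ M n (a + b) := by
  induction hf using Submodule.span_induction with
  | mem x hx =>
    obtain ⟨T, hT, rfl⟩ := hx
    induction hg using Submodule.span_induction with
    | mem y hy =>
      obtain ⟨T', hT', rfl⟩ := hy
      rw [e_mul]
      exact e_mem ((Finset.card_union_le _ _).trans (Nat.add_le_add hT hT'))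
    | zero => rw [mul_zero]; exact zero_mem _
    | add y z _ _ hy hz => rw [mul_add]; exact add_mem hy hz
    | smul c y _ hy => rw [mul_smul_comm]; exact Submodule.smul_mem _ _ hy
  | zero => rw [zero_mul]; exact zero_mem _
  | add x y _ _ hx hy => rw [add_mul]; exact add_mem hx hy
  | smul c x _ hx => rw [smul_mul_assoc]; exact Submodule.smul_mem _ _ hx

lemma card_inter_eq (A S : Finset (Fin n)) :
    ((A ∩ S).card : ℚ) = ∑ i ∈ A, e {i} S := by
  have h : A ∩ S = A.filter (· ∈ S) := by ext x; simp [Finset.mem_inter, and_comm]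
  rw [h, Finset.card_filter]
  push_cast
  refine Finset.sum_congr rfl fun i _ => ?_
  simp [e, Finset.singleton_subset_iff]

lemma linear_mem (A : Finset (Fin n)) (c : ℚ) :
    (fun S => ((A ∩ S).card : ℚ) - c) ∈ M n 1 := by
  have h : (fun S => ((A ∩ S).card : ℚ) - c) = (∑ i ∈ A, e {i}) - c • e ∅ := by
    funext S
    simp only [Pi.sub_apply, Finset.sum_apply, Pi.smul_apply, smul_eq_mul]
    rw [card_inter_eq]
    simp [e]
  rw [h]
  exact sub_mem (Submodule.sum_mem _ fun i _ => e_mem (by simp))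
    (Submodule.smul_mem _ _ (e_mem (by simp)))

lemma prod_mem_M {ι : Type*} [DecidableEq ι] (t : Finset ι) (f : ι → Finset (Fin n) → ℚ)
    (hf : ∀ x ∈ t, f x ∈ M n 1) : (∏ x ∈ t, f x) ∈ M n t.card := by
  induction t using Finset.cons_induction with
  | empty =>
    have h1 : (1 : Finset (Fin n) → ℚ) = e ∅ := by funext S; simp [e]
    simpa [h1] using e_mem (n := n) (T := (∅ : Finset (Fin n))) (by simp)
  | cons a t ha ih =>
    rw [Finset.prod_cons, Finset.card_cons]
    have := mul_mem_M (hf a (Finset.mem_cons_self a t))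
      (ih fun x hx => hf x (Finset.mem_cons_of_mem hx))
    rwa [add_comm] at this

lemma card_filter_card_le (n m : ℕ) :
    ((univ : Finset (Finset (Fin n))).filter (fun T => T.card ≤ m)).card
      = ∑ i ∈ Finset.range (m + 1), n.choose i := by
  have h : (univ : Finset (Finset (Fin n))).filter (fun T => T.card ≤ m)
      = (Finset.range (m + 1)).biUnion (fun i => Finset.powersetCard i univ) := by
    ext T
    simp [Finset.mem_powersetCard, Nat.lt_succ_iff]
  rw [h, Finset.card_biUnion]
  · refine Finset.sum_congr rfl fun i _ => ?_
    simp [Finset.card_powersetCard]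
  · intro i _ j _ hij
    rw [Function.onFun, Finset.disjoint_left]
    intro T hTi hTj
    rw [Finset.mem_powersetCard] at hTi hTj
    exact hij (hTi.2 ▸ hTj.2)

/-- The ABS polynomial of a set `A`, as a function on subsets. -/
def fA (L : Finset ℕ) (A : Finset (Fin n)) : Finset (Fin n) → ℚ :=
  fun S => ∏ l ∈ L.filter (fun l => l < A.card), (((A ∩ S).card : ℚ) - l)

/-- The product `∏_{k∈K} (|S| - k)`. -/
def prodK (K : Finset ℕ) : Finset (Fin n) → ℚ :=
  fun S => ∏ k ∈ K, ((S.card : ℚ) - k)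

lemma fA_mem (L : Finset ℕ) (A : Finset (Fin n)) {s : ℕ} (hL : L.card ≤ s) :
    fA L A ∈ M n s := by
  have h : fA L A = ∏ l ∈ L.filter (fun l => l < A.card),
      (fun S : Finset (Fin n) => ((A ∩ S).card : ℚ) - l) := by
    funext S; rw [Finset.prod_apply]; rfl
  rw [h]
  refine M_mono ?_ (prod_mem_M _ _ fun l _ => linear_mem A l)
  exact le_trans (Finset.card_filter_le _ _) hL

lemma prodK_mem (K : Finset ℕ) : prodK (n := n) K ∈ M n K.card := by
  have h : prodK (n := n) K = ∏ k ∈ K,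
      (fun S : Finset (Fin n) => (((univ : Finset (Fin n)) ∩ S).card : ℚ) - k) := by
    funext S; rw [Finset.prod_apply]; simp [prodK, Finset.univ_inter]
  rw [h]
  exact prod_mem_M _ _ fun k _ => linear_mem univ k

end ABSaux

/-- The `j`-non-shadow of a family `ℱ`: the `j`-subsets of `[n]` contained in no
member of `ℱ`. -/
def nonShadow (n j : ℕ) (ℱ : Finset (Finset (Fin n))) : Finset (Finset (Fin n)) :=
  (Finset.powersetCard j (Finset.univ : Finset (Fin n))).filter
    (fun T => ∀ F ∈ ℱ, ¬ T ⊆ F)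

/-- Multilevel non-shadow ABS theorem:
`|ℱ| + Σ_{j=s−r+1}^{s} |𝒩_j(ℱ)| ≤ Σ_{i=s−r+1}^{s} C(n,i)`. -/
theorem stmt6 (n r s : ℕ) (hr : 1 ≤ r) (hrs : r ≤ s)
    (K L : Finset ℕ) (hKcard : K.card = r) (hLcard : L.card = s)
    (hgap : ∀ k ∈ K, s - r < k)
    (ℱ : Finset (Finset (Fin n)))
    (hℱK : ∀ F ∈ ℱ, F.card ∈ K)
    (hint : ∀ A ∈ ℱ, ∀ B ∈ ℱ, A ≠ B → (A ∩ B).card ∈ L) :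
    ℱ.card + ∑ j ∈ Finset.Icc (s - r + 1) s, (nonShadow n j ℱ).card
      ≤ ∑ i ∈ Finset.Icc (s - r + 1) s, n.choose i := by
  classical
  set P : Finset (Finset (Fin n)) := univ.filter (fun T => T.card ≤ s - r) with hPdef
  set N : Finset (Finset (Fin n)) :=
    (Finset.Icc (s - r + 1) s).biUnion (fun j => nonShadow n j ℱ) with hNdef
  have hNmem : ∀ T ∈ N, (s - r + 1 ≤ T.card ∧ T.card ≤ s) ∧ ∀ F ∈ ℱ, ¬ T ⊆ F := by
    intro T hT
    rw [hNdef, Finset.mem_biUnion] at hT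
    obtain ⟨j, hj, hTj⟩ := hT
    rw [nonShadow, Finset.mem_filter, Finset.mem_powersetCard] at hTj
    rw [Finset.mem_Icc] at hj
    exact ⟨⟨hTj.1.2 ▸ hj.1, hTj.1.2 ▸ hj.2⟩, hTj.2⟩
  have hNcard : N.card = ∑ j ∈ Finset.Icc (s - r + 1) s, (nonShadow n j ℱ).card := by
    rw [hNdef]
    refine Finset.card_biUnion ?_
    intro i _ j _ hij
    rw [Function.onFun, Finset.disjoint_left]
    intro T hTi hTj
    rw [nonShadow, Finset.mem_filter, Finset.mem_powersetCard] at hTi hTj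
    exact hij (hTi.1.2 ▸ hTj.1.2)
  -- the family of vectors
  set v : ({A // A ∈ ℱ} ⊕ ({T // T ∈ P} ⊕ {T // T ∈ N})) → (Finset (Fin n) → ℚ) :=
    Sum.elim (fun A => ABSaux.fA L A.1)
      (Sum.elim (fun T => ABSaux.e T.1 * ABSaux.prodK K) (fun T => ABSaux.e T.1)) with hvdef
  have hv_mem : ∀ i, v i ∈ ABSaux.M n s := by
    rintro (⟨A, hA⟩ | ⟨T, hT⟩ | ⟨T, hT⟩)
    · exact ABSaux.fA_mem L A (le_of_eq hLcard)
    · have h1 : ABSaux.e T ∈ ABSaux.M n (s - r) := by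
        rw [hPdef, Finset.mem_filter] at hT
        exact ABSaux.e_mem hT.2
      have h2 := ABSaux.mul_mem_M h1 (hKcard ▸ ABSaux.prodK_mem (n := n) K)
      rwa [Nat.sub_add_cancel hrs] at h2
    · exact ABSaux.e_mem (hNmem T hT).1.2
  have hv_li : LinearIndependent ℚ v := by
    rw [Fintype.linearIndependent_iff]
    intro g hg
    have hgS : ∀ S, (∑ A : {A // A ∈ ℱ}, g (Sum.inl A) * ABSaux.fA L A.1 S)
        + ((∑ T : {T // T ∈ P}, g (Sum.inr (Sum.inl T)) * (ABSaux.e T.1 S * ABSaux.prodK K S))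
        + (∑ T : {T // T ∈ N}, g (Sum.inr (Sum.inr T)) * ABSaux.e T.1 S)) = 0 := by
      intro S
      have h := congrFun hg S
      rw [Finset.sum_apply] at h
      rw [Fintype.sum_sum_type, Fintype.sum_sum_type] at h
      simpa only [hvdef, Pi.smul_apply, smul_eq_mul, Sum.elim_inl, Sum.elim_inr,
        Pi.mul_apply, Pi.zero_apply] using h
    have phase1 : ∀ m, ∀ A : {A // A ∈ ℱ}, A.1.card = m → g (Sum.inl A) = 0 := by
      intro m
      induction m using Nat.strong_induction_on with
      | _ m ih =>
        intro A hAm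
        have h0 := hgS A.1
        have hP0 : ∑ T : {T // T ∈ P},
            g (Sum.inr (Sum.inl T)) * (ABSaux.e T.1 A.1 * ABSaux.prodK K A.1) = 0 := by
          refine Finset.sum_eq_zero fun T _ => ?_
          have hz : ABSaux.prodK K A.1 = 0 := by
            simp only [ABSaux.prodK]
            exact Finset.prod_eq_zero (hℱK A.1 A.2) (by rw [sub_self])
          rw [hz, mul_zero, mul_zero]
        have hN0 : ∑ T : {T // T ∈ N}, g (Sum.inr (Sum.inr T)) * ABSaux.e T.1 A.1 = 0 := by
          refine Finset.sum_eq_zero fun T _ => ?_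
          have hz : ABSaux.e T.1 A.1 = 0 := by
            simp only [ABSaux.e]
            rw [if_neg ((hNmem T.1 T.2).2 A.1 A.2)]
          rw [hz, mul_zero]
        rw [hP0, hN0, add_zero, add_zero] at h0
        have hsingle : ∑ B : {A // A ∈ ℱ}, g (Sum.inl B) * ABSaux.fA L B.1 A.1
            = g (Sum.inl A) * ABSaux.fA L A.1 A.1 := by
          refine Fintype.sum_eq_single A fun B hBA => ?_
          by_cases hsub : B.1 ⊆ A.1
          · have hne : B.1 ≠ A.1 := fun h => hBA (Subtype.ext h)
            have hlt : B.1.card < m :=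
              hAm ▸ Finset.card_lt_card (Finset.ssubset_iff_subset_ne.2 ⟨hsub, hne⟩)
            rw [ih _ hlt B rfl, zero_mul]
          · have hne : B.1 ≠ A.1 := fun h => hsub (h ▸ Finset.Subset.refl _)
            have hmemL : (B.1 ∩ A.1).card ∈ L := hint B.1 B.2 A.1 A.2 hne
            have hltB : (B.1 ∩ A.1).card < B.1.card := by
              refine Finset.card_lt_card (Finset.ssubset_iff_subset_ne.2
                ⟨Finset.inter_subset_left, fun h => hsub (Finset.inter_eq_left.mp h)⟩)
            have hz : ABSaux.fA L B.1 A.1 = 0 := by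
              simp only [ABSaux.fA]
              exact Finset.prod_eq_zero (Finset.mem_filter.2 ⟨hmemL, hltB⟩) (by rw [sub_self])
            rw [hz, mul_zero]
        rw [hsingle] at h0
        have hfAne : ABSaux.fA L A.1 A.1 ≠ 0 := by
          simp only [ABSaux.fA, Finset.inter_self]
          rw [Finset.prod_ne_zero_iff]
          intro l hl hzero
          rw [Finset.mem_filter] at hl
          rw [sub_eq_zero] at hzero
          have : A.1.card = l := by exact_mod_cast hzero
          omega
        exact (mul_eq_zero.mp h0).resolve_right hfAne
    have hPN : ∀ T ∈ N, T ∉ P := by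
      intro T hTN hTP
      rw [hPdef, Finset.mem_filter] at hTP
      have h1 := (hNmem T hTN).1.1
      omega
    have phase2 : ∀ m, ∀ T : Finset (Fin n), T.card = m →
        (∀ h : T ∈ P, g (Sum.inr (Sum.inl ⟨T, h⟩)) = 0)
        ∧ (∀ h : T ∈ N, g (Sum.inr (Sum.inr ⟨T, h⟩)) = 0) := by
      intro m
      induction m using Nat.strong_induction_on with
      | _ m ih =>
        intro T hTm
        have h0 := hgS T
        have hF0 : ∑ A : {A // A ∈ ℱ}, g (Sum.inl A) * ABSaux.fA L A.1 T = 0 :=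
          Finset.sum_eq_zero fun A _ => by rw [phase1 A.1.card A rfl, zero_mul]
        rw [hF0, zero_add] at h0
        have hprodTne : T.card ≤ s - r → ABSaux.prodK K T ≠ 0 := by
          intro hc
          simp only [ABSaux.prodK]
          rw [Finset.prod_ne_zero_iff]
          intro k hk hzero
          rw [sub_eq_zero] at hzero
          have hks : s - r < k := hgap k hk
          have : T.card = k := by exact_mod_cast hzero
          omega
        constructor
        · intro hTP
          have hN0 : ∑ T'' : {T // T ∈ N}, g (Sum.inr (Sum.inr T'')) * ABSaux.e T''.1 T = 0 := by
            refine Finset.sum_eq_zero fun T'' _ => ?_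
            by_cases hsub : T''.1 ⊆ T
            · have hne : T''.1 ≠ T := fun h => hPN T''.1 T''.2 (h ▸ hTP)
              have hlt : T''.1.card < m :=
                hTm ▸ Finset.card_lt_card (Finset.ssubset_iff_subset_ne.2 ⟨hsub, hne⟩)
              have hz := (ih _ hlt T''.1 rfl).2 T''.2
              rw [Subtype.coe_eta] at hz
              rw [hz, zero_mul]
            · have hz : ABSaux.e T''.1 T = 0 := by simp only [ABSaux.e]; rw [if_neg hsub]
              rw [hz, mul_zero]
          rw [hN0, add_zero] at h0
          have hsingle : ∑ T' : {T // T ∈ P},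
              g (Sum.inr (Sum.inl T')) * (ABSaux.e T'.1 T * ABSaux.prodK K T)
              = g (Sum.inr (Sum.inl ⟨T, hTP⟩)) * (ABSaux.e T T * ABSaux.prodK K T) := by
            refine Fintype.sum_eq_single (⟨T, hTP⟩ : {T // T ∈ P}) fun T' hT' => ?_
            by_cases hsub : T'.1 ⊆ T
            · have hne : T'.1 ≠ T := fun h => hT' (Subtype.ext h)
              have hlt : T'.1.card < m :=
                hTm ▸ Finset.card_lt_card (Finset.ssubset_iff_subset_ne.2 ⟨hsub, hne⟩)
              have hz := (ih _ hlt T'.1 rfl).1 T'.2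
              rw [Subtype.coe_eta] at hz
              rw [hz, zero_mul]
            · have hz : ABSaux.e T'.1 T = 0 := by simp only [ABSaux.e]; rw [if_neg hsub]
              rw [hz, zero_mul, mul_zero]
          rw [hsingle] at h0
          have h1 : ABSaux.e T T = 1 := by
            simp only [ABSaux.e]; rw [if_pos (Finset.Subset.refl T)]
          rw [h1, one_mul] at h0
          have hc : T.card ≤ s - r := by rw [hPdef, Finset.mem_filter] at hTP; exact hTP.2
          exact (mul_eq_zero.mp h0).resolve_right (hprodTne hc)
        · intro hTN
          have hP0 : ∑ T' : {T // T ∈ P},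
              g (Sum.inr (Sum.inl T')) * (ABSaux.e T'.1 T * ABSaux.prodK K T) = 0 := by
            refine Finset.sum_eq_zero fun T' _ => ?_
            by_cases hsub : T'.1 ⊆ T
            · have hne : T'.1 ≠ T := fun h => hPN T hTN (h ▸ T'.2)
              have hlt : T'.1.card < m :=
                hTm ▸ Finset.card_lt_card (Finset.ssubset_iff_subset_ne.2 ⟨hsub, hne⟩)
              have hz := (ih _ hlt T'.1 rfl).1 T'.2
              rw [Subtype.coe_eta] at hz
              rw [hz, zero_mul]
            · have hz : ABSaux.e T'.1 T = 0 := by simp only [ABSaux.e]; rw [if_neg hsub]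
              rw [hz, zero_mul, mul_zero]
          rw [hP0, zero_add] at h0
          have hsingle : ∑ T'' : {T // T ∈ N}, g (Sum.inr (Sum.inr T'')) * ABSaux.e T''.1 T
              = g (Sum.inr (Sum.inr ⟨T, hTN⟩)) * ABSaux.e T T := by
            refine Fintype.sum_eq_single (⟨T, hTN⟩ : {T // T ∈ N}) fun T'' hT'' => ?_
            by_cases hsub : T''.1 ⊆ T
            · have hne : T''.1 ≠ T := fun h => hT'' (Subtype.ext h)
              have hlt : T''.1.card < m :=
                hTm ▸ Finset.card_lt_card (Finset.ssubset_iff_subset_ne.2 ⟨hsub, hne⟩)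
              have hz := (ih _ hlt T''.1 rfl).2 T''.2
              rw [Subtype.coe_eta] at hz
              rw [hz, zero_mul]
            · have hz : ABSaux.e T''.1 T = 0 := by simp only [ABSaux.e]; rw [if_neg hsub]
              rw [hz, mul_zero]
          rw [hsingle] at h0
          have h1 : ABSaux.e T T = 1 := by
            simp only [ABSaux.e]; rw [if_pos (Finset.Subset.refl T)]
          rw [h1, mul_one] at h0
          exact h0
    rintro (A | T | T)
    · exact phase1 A.1.card A rfl
    · have := (phase2 T.1.card T.1 rfl).1 T.2
      rwa [Subtype.coe_eta] at this
    · have := (phase2 T.1.card T.1 rfl).2 T.2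
      rwa [Subtype.coe_eta] at this
  -- counting
  have hfr1 := finrank_span_eq_card hv_li
  have hle : Submodule.span ℚ (Set.range v) ≤ ABSaux.M n s :=
    Submodule.span_le.2 (Set.range_subset_iff.2 hv_mem)
  have hmono := Submodule.finrank_mono hle
  have hMcard : Module.finrank ℚ ↥(ABSaux.M n s)
      ≤ ∑ i ∈ Finset.range (s + 1), n.choose i := by
    have hset : {f | ∃ T : Finset (Fin n), T.card ≤ s ∧ f = ABSaux.e T}
        = ↑(((univ : Finset (Finset (Fin n))).filter (fun T => T.card ≤ s)).image ABSaux.e) := by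
      ext f
      simp only [Finset.coe_image, Set.mem_image, Finset.mem_coe, Finset.mem_filter,
        Finset.mem_univ, true_and, Set.mem_setOf_eq]
      constructor
      · rintro ⟨T, hT, rfl⟩; exact ⟨T, hT, rfl⟩
      · rintro ⟨T, hT, rfl⟩; exact ⟨T, hT, rfl⟩
    calc Module.finrank ℚ ↥(ABSaux.M n s)
        ≤ (((univ : Finset (Finset (Fin n))).filter (fun T => T.card ≤ s)).image ABSaux.e).card := by
          rw [ABSaux.M, hset]
          exact finrank_span_finset_le_card _
      _ ≤ ((univ : Finset (Finset (Fin n))).filter (fun T => T.card ≤ s)).card :=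
          Finset.card_image_le
      _ = ∑ i ∈ Finset.range (s + 1), n.choose i := ABSaux.card_filter_card_le n s
  have hcards : ℱ.card + (P.card + N.card) ≤ ∑ i ∈ Finset.range (s + 1), n.choose i := by
    have h := le_trans hmono hMcard
    rw [hfr1] at h
    simpa [Fintype.card_sum, Fintype.card_coe] using h
  have hPcard : P.card = ∑ i ∈ Finset.range (s - r + 1), n.choose i := by
    rw [hPdef]; exact ABSaux.card_filter_card_le n (s - r)
  have hsplit : ∑ i ∈ Finset.range (s + 1), n.choose i
      = ∑ i ∈ Finset.range (s - r + 1), n.choose i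
        + ∑ i ∈ Finset.Icc (s - r + 1) s, n.choose i := by
    rw [Finset.range_eq_Ico, Finset.range_eq_Ico, ← Finset.Ico_add_one_right_eq_Icc]
    exact (Finset.sum_Ico_consecutive (fun i => n.choose i)
      (by omega : 0 ≤ s - r + 1) (by omega : s - r + 1 ≤ s + 1)).symm
  rw [hPcard, hNcard, hsplit] at hcards
  omega
end

section
/- Let K = {k_1,…,k_r} and L be a set of s nonnegative integers with k_i > s − r for every i. If ℱ ⊆ ⋃_{k∈K} C([n],k) is L-intersecting, then |ℱ| ≤ Σ_{j=s−r+1}^{s} |∂_j ℱ|, where ∂_j ℱ denotes the j-shadow of ℱ. -/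
open Finset BigOperators

/-- The `j`-shadow of a family `ℱ`: the `j`-subsets of `[n]` contained in some
member of `ℱ`. -/
def shadow' (n j : ℕ) (ℱ : Finset (Finset (Fin n))) : Finset (Finset (Fin n)) :=
  (Finset.powersetCard j (Finset.univ : Finset (Fin n))).filter
    (fun T => ∃ F ∈ ℱ, T ⊆ F)

namespace ABSShadow

variable {n : ℕ} (ℱ : Finset (Finset (Fin n)))

/-- Indicator function `S ↦ [T ⊆ S]` on `ℱ`. -/
def E (T : Finset (Fin n)) : ↥ℱ → ℝ :=
  fun S => if T ⊆ (S : Finset (Fin n)) then 1 else 0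

/-- Generators: supersets of `T` inside `F` of size at most `d`. -/
def Gen (F T : Finset (Fin n)) (d : ℕ) : Set (↥ℱ → ℝ) :=
  E ℱ '' {T' | T ⊂ T' ∧ T' ⊆ F ∧ T'.card ≤ d}

/-- Multiplication by `(|S ∩ F| - k)` as a linear map. -/
def mulMap (F : Finset (Fin n)) (k : ℝ) : (↥ℱ → ℝ) →ₗ[ℝ] (↥ℱ → ℝ) where
  toFun f := fun S => ((((S : Finset (Fin n)) ∩ F).card : ℝ) - k) * f S
  map_add' f g := by funext S; simp [mul_add]
  map_smul' c f := by funext S; simp; ring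

lemma mulE (F T : Finset (Fin n)) (hTF : T ⊆ F) (k : ℝ) :
    mulMap ℱ F k (E ℱ T)
      = ((T.card : ℝ) - k) • E ℱ T + ∑ i ∈ F \ T, E ℱ (insert i T) := by
  funext S
  simp only [mulMap, LinearMap.coe_mk, AddHom.coe_mk, E, Pi.add_apply, Pi.smul_apply,
    Finset.sum_apply, smul_eq_mul]
  by_cases h : T ⊆ (S : Finset (Fin n))
  · rw [if_pos h, mul_one, mul_one]
    have hrw : ∀ i ∈ F \ T,
        (if insert i T ⊆ (S : Finset (Fin n)) then (1:ℝ) else 0)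
          = if i ∈ (S : Finset (Fin n)) then 1 else 0 := by
      intro i _
      by_cases hi : i ∈ (S : Finset (Fin n)) <;> simp [insert_subset_iff, hi, h]
    rw [Finset.sum_congr rfl hrw, Finset.sum_boole]
    have hcount : (F \ T).filter (fun i => i ∈ (S : Finset (Fin n)))
        = ((S : Finset (Fin n)) ∩ F) \ T := by
      ext x; simp only [mem_filter, mem_sdiff, mem_inter]; tauto
    have hsub : T ⊆ (S : Finset (Fin n)) ∩ F := subset_inter h hTF
    have hcard := Finset.card_sdiff_add_card_eq_card hsub
    rw [hcount]
    have : (((((S : Finset (Fin n)) ∩ F) \ T).card : ℝ) + T.card)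
        = (((S : Finset (Fin n)) ∩ F).card : ℝ) := by exact_mod_cast congrArg Nat.cast hcard
    linarith
  · rw [if_neg h, mul_zero, mul_zero]
    have hz : ∀ i ∈ F \ T,
        (if insert i T ⊆ (S : Finset (Fin n)) then (1:ℝ) else 0) = 0 := by
      intro i _
      rw [if_neg]
      exact fun hc => h ((Finset.subset_insert i T).trans hc)
    rw [Finset.sum_congr rfl hz, Finset.sum_const_zero, zero_add]

lemma E_mem_gen {F T T' : Finset (Fin n)} (d : ℕ) (h1 : T ⊂ T') (h2 : T' ⊆ F)
    (h3 : T'.card ≤ d) : E ℱ T' ∈ Gen ℱ F T d :=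
  ⟨T', ⟨h1, h2, h3⟩, rfl⟩

lemma mul_gen_mem {F T : Finset (Fin n)} {d : ℕ} (k : ℝ) {f : ↥ℱ → ℝ}
    (hf : f ∈ Submodule.span ℝ (Gen ℱ F T d)) :
    mulMap ℱ F k f ∈ Submodule.span ℝ (Gen ℱ F T (d + 1)) := by
  have hmap : Submodule.span ℝ (Gen ℱ F T d)
      ≤ Submodule.comap (mulMap ℱ F k) (Submodule.span ℝ (Gen ℱ F T (d+1))) := by
    refine Submodule.span_le.mpr ?_
    rintro _ ⟨T', ⟨h1, h2, h3⟩, rfl⟩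
    simp only [SetLike.mem_coe, Submodule.mem_comap]
    rw [mulE ℱ F T' h2 k]
    refine Submodule.add_mem _ (Submodule.smul_mem _ _ (Submodule.subset_span
      (E_mem_gen ℱ (d+1) h1 h2 (h3.trans (Nat.le_succ d))))) ?_
    refine Submodule.sum_mem _ (fun i hi => Submodule.subset_span (E_mem_gen ℱ (d+1) ?_ ?_ ?_))
    · exact h1.trans_subset (Finset.subset_insert i T')
    · exact Finset.insert_subset (Finset.mem_sdiff.mp hi).1 h2
    · rw [Finset.card_insert_of_notMem (Finset.mem_sdiff.mp hi).2]
      exact Nat.succ_le_succ h3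
  exact hmap hf

/-- Key expansion lemma. -/
lemma prodMem (F : Finset (Fin n)) (m : Finset ℕ) (T : Finset (Fin n)) (hTF : T ⊆ F) :
    (fun S : ↥ℱ => (∏ k ∈ m, ((((S : Finset (Fin n)) ∩ F).card : ℝ) - k)) * E ℱ T S)
      - (∏ k ∈ m, ((T.card : ℝ) - k)) • E ℱ T
      ∈ Submodule.span ℝ (Gen ℱ F T (T.card + m.card)) := by
  classical
  induction m using Finset.induction_on with
  | empty => simp
  | @insert k m hk ih =>
    have hfun : (fun S : ↥ℱ =>
        (∏ j ∈ insert k m, ((((S : Finset (Fin n)) ∩ F).card : ℝ) - j)) * E ℱ T S)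
        = mulMap ℱ F k (fun S : ↥ℱ =>
            (∏ j ∈ m, ((((S : Finset (Fin n)) ∩ F).card : ℝ) - j)) * E ℱ T S) := by
      funext S
      simp only [mulMap, LinearMap.coe_mk, AddHom.coe_mk]
      rw [Finset.prod_insert hk]; ring
    have h1 := mul_gen_mem ℱ k ih
    have hsum : (∑ i ∈ F \ T, E ℱ (insert i T))
        ∈ Submodule.span ℝ (Gen ℱ F T (T.card + m.card + 1)) := by
      refine Submodule.sum_mem _ (fun i hi => Submodule.subset_span
        (E_mem_gen ℱ _ ?_ ?_ ?_))
      · exact Finset.ssubset_insert (Finset.mem_sdiff.mp hi).2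
      · exact Finset.insert_subset (Finset.mem_sdiff.mp hi).1 hTF
      · rw [Finset.card_insert_of_notMem (Finset.mem_sdiff.mp hi).2]; omega
    have key : mulMap ℱ F k (fun S : ↥ℱ =>
          (∏ j ∈ m, ((((S : Finset (Fin n)) ∩ F).card : ℝ) - j)) * E ℱ T S)
          - (∏ j ∈ insert k m, ((T.card : ℝ) - j)) • E ℱ T
        = mulMap ℱ F k ((fun S : ↥ℱ =>
            (∏ j ∈ m, ((((S : Finset (Fin n)) ∩ F).card : ℝ) - j)) * E ℱ T S)
            - (∏ j ∈ m, ((T.card : ℝ) - j)) • E ℱ T)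
          + (∏ j ∈ m, ((T.card : ℝ) - j)) • (∑ i ∈ F \ T, E ℱ (insert i T)) := by
      rw [map_sub, map_smul, mulE ℱ F T hTF k, Finset.prod_insert hk]
      rw [smul_add, smul_smul]
      abel_nf
      rw [mul_comm]
    rw [hfun, Finset.card_insert_of_notMem hk, key]
    exact Submodule.add_mem _ h1 (Submodule.smul_mem _ _ hsum)


/-- The span of indicators of shadow sets with cardinality in `[s-r+1, s]`. -/
def genSet (r s : ℕ) : Set (↥ℱ → ℝ) :=
  E ℱ '' {T | (∃ F ∈ ℱ, T ⊆ F) ∧ s - r + 1 ≤ T.card ∧ T.card ≤ s}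

lemma low (r s : ℕ) (K : Finset ℕ) (hr : 1 ≤ r) (hrs : r ≤ s) (hKcard : K.card = r)
    (hgap : ∀ k ∈ K, s - r < k) (hℱK : ∀ F ∈ ℱ, F.card ∈ K) :
    ∀ N (T : Finset (Fin n)), T.card ≤ s → s - T.card ≤ N →
      E ℱ T ∈ Submodule.span ℝ (genSet ℱ r s) := by
  intro N
  induction N with
  | zero =>
    intro T hTs hN
    by_cases hsh : ∃ F ∈ ℱ, T ⊆ F
    · have hbig : s - r + 1 ≤ T.card := by omega
      exact Submodule.subset_span ⟨T, ⟨hsh, hbig, hTs⟩, rfl⟩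
    · have : E ℱ T = 0 := by
        funext S
        exact if_neg (fun h => hsh ⟨S, S.2, h⟩)
      rw [this]; exact Submodule.zero_mem _
  | succ N ih =>
    intro T hTs hN
    by_cases hsh : ∃ F ∈ ℱ, T ⊆ F
    · by_cases hbig : s - r + 1 ≤ T.card
      · exact Submodule.subset_span ⟨T, ⟨hsh, hbig, hTs⟩, rfl⟩
      · have hts : T.card ≤ s - r := by omega
        have h0 := prodMem ℱ Finset.univ K T (Finset.subset_univ T)
        have hzero : (fun S : ↥ℱ =>
            (∏ k ∈ K, ((((S : Finset (Fin n)) ∩ Finset.univ).card : ℝ) - k)) * E ℱ T S)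
            = 0 := by
          funext S
          refine mul_eq_zero.mpr (Or.inl ?_)
          refine Finset.prod_eq_zero (hℱK (S : Finset (Fin n)) S.2) ?_
          rw [Finset.inter_univ]; exact sub_self _
        rw [hzero] at h0
        have hc : (∏ k ∈ K, ((T.card : ℝ) - k)) ≠ 0 := by
          refine Finset.prod_ne_zero_iff.mpr (fun k hk => sub_ne_zero.mpr ?_)
          have hlt : T.card < k := lt_of_le_of_lt hts (hgap k hk)
          exact_mod_cast hlt.ne
        have hE : E ℱ T ∈ Submodule.span ℝ (Gen ℱ Finset.univ T (T.card + K.card)) := by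
          rw [zero_sub] at h0
          have h2 := Submodule.neg_mem _ h0
          rw [neg_neg] at h2
          have h3 := Submodule.smul_mem _ (∏ k ∈ K, ((T.card : ℝ) - k))⁻¹ h2
          rwa [inv_smul_smul₀ hc] at h3
        refine Submodule.span_le.mpr ?_ hE
        rintro _ ⟨T', ⟨h1, h2, h3⟩, rfl⟩
        have hlt : T.card < T'.card := Finset.card_lt_card h1
        exact ih T' (by omega) (by omega)
    · have : E ℱ T = 0 := by
        funext S
        exact if_neg (fun h => hsh ⟨S, S.2, h⟩)
      rw [this]; exact Submodule.zero_mem _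

/-- The polynomial function attached to a member of the family. -/
def gfun (L : Finset ℕ) (F : Finset (Fin n)) : ↥ℱ → ℝ :=
  fun S => ∏ l ∈ L.filter (· < F.card), ((((S : Finset (Fin n)) ∩ F).card : ℝ) - l)

lemma gmem (r s : ℕ) (K L : Finset ℕ) (hr : 1 ≤ r) (hrs : r ≤ s) (hKcard : K.card = r)
    (hLcard : L.card = s) (hgap : ∀ k ∈ K, s - r < k) (hℱK : ∀ F ∈ ℱ, F.card ∈ K)
    (F : Finset (Fin n)) :
    gfun ℱ L F ∈ Submodule.span ℝ (genSet ℱ r s) := by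
  have h0 := prodMem ℱ F (L.filter (· < F.card)) ∅ (Finset.empty_subset F)
  have hEe : (fun S : ↥ℱ =>
      (∏ k ∈ L.filter (· < F.card), ((((S : Finset (Fin n)) ∩ F).card : ℝ) - k)) * E ℱ ∅ S)
      = gfun ℱ L F := by
    funext S
    simp [E, gfun]
  rw [hEe] at h0
  have hcards : (L.filter (· < F.card)).card ≤ s := by
    rw [← hLcard]; exact Finset.card_filter_le _ _
  have hsub : Submodule.span ℝ (Gen ℱ F ∅ ((∅ : Finset (Fin n)).card + (L.filter (· < F.card)).card))
      ≤ Submodule.span ℝ (genSet ℱ r s) := by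
    refine Submodule.span_le.mpr ?_
    rintro _ ⟨T', ⟨h1, h2, h3⟩, rfl⟩
    exact low ℱ r s K hr hrs hKcard hgap hℱK s T'
      (by simpa using h3.trans (by simpa using hcards)) (Nat.sub_le _ _)
  have hE0 : E ℱ ∅ ∈ Submodule.span ℝ (genSet ℱ r s) :=
    low ℱ r s K hr hrs hKcard hgap hℱK s ∅ (by simp) (by simp)
  have := Submodule.add_mem _ (hsub h0)
    (Submodule.smul_mem _ (∏ k ∈ L.filter (· < F.card), (((∅ : Finset (Fin n)).card : ℝ) - k)) hE0)
  simpa using this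

lemma gzero (L : Finset ℕ)
    (hint : ∀ A ∈ ℱ, ∀ B ∈ ℱ, A ≠ B → (A ∩ B).card ∈ L)
    (A B : ↥ℱ) (hne : A ≠ B) (hcard : (B : Finset (Fin n)).card ≤ (A : Finset (Fin n)).card) :
    gfun ℱ L (A : Finset (Fin n)) B = 0 := by
  have hne' : (A : Finset (Fin n)) ≠ (B : Finset (Fin n)) := fun h => hne (Subtype.ext h)
  have hmem : ((B : Finset (Fin n)) ∩ (A : Finset (Fin n))).card ∈ L := by
    rw [Finset.inter_comm]
    exact hint _ A.2 _ B.2 hne'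
  have hlt : ((B : Finset (Fin n)) ∩ (A : Finset (Fin n))).card < (A : Finset (Fin n)).card := by
    rcases lt_or_eq_of_le (Finset.card_le_card
      (Finset.inter_subset_right : (B : Finset (Fin n)) ∩ A ⊆ A)) with h | h
    · exact h
    · exfalso
      have heq : (B : Finset (Fin n)) ∩ (A : Finset (Fin n)) = A :=
        Finset.eq_of_subset_of_card_le Finset.inter_subset_right (le_of_eq h.symm)
      have hAB : (A : Finset (Fin n)) ⊆ B := by
        intro x hx
        have : x ∈ (B : Finset (Fin n)) ∩ (A : Finset (Fin n)) := by rw [heq]; exact hx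
        exact (Finset.mem_inter.mp this).1
      exact hne' (Finset.eq_of_subset_of_card_le hAB hcard)
  exact Finset.prod_eq_zero (Finset.mem_filter.mpr ⟨hmem, hlt⟩) (sub_self _)

lemma gne (L : Finset ℕ) (A : ↥ℱ) : gfun ℱ L (A : Finset (Fin n)) A ≠ 0 := by
  refine Finset.prod_ne_zero_iff.mpr (fun l hl => sub_ne_zero.mpr ?_)
  have hlt : l < ((A : Finset (Fin n)) ∩ (A : Finset (Fin n))).card := by
    rw [Finset.inter_self]
    exact (Finset.mem_filter.mp hl).2
  exact_mod_cast hlt.ne'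

lemma gindep (L : Finset ℕ)
    (hint : ∀ A ∈ ℱ, ∀ B ∈ ℱ, A ≠ B → (A ∩ B).card ∈ L) :
    LinearIndependent ℝ (fun F : ↥ℱ => gfun ℱ L (F : Finset (Fin n))) := by
  rw [linearIndependent_iff']
  suffices key : ∀ t : Finset ↥ℱ, ∀ c : ↥ℱ → ℝ,
      (∑ i ∈ t, c i • gfun ℱ L (i : Finset (Fin n))) = 0 → ∀ i ∈ t, c i = 0 from key
  intro t
  induction t using Finset.strongInductionOn with
  | _ t ih =>
    intro c hsum i hi
    obtain ⟨F₀, hF₀, hmin⟩ := Finset.exists_min_image t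
      (fun F : ↥ℱ => (F : Finset (Fin n)).card) ⟨i, hi⟩
    have h0 : c F₀ = 0 := by
      have hev := congrFun hsum F₀
      simp only [Finset.sum_apply, Pi.smul_apply, smul_eq_mul, Pi.zero_apply] at hev
      rw [Finset.sum_eq_single F₀ (fun F hF hFne => by
          rw [gzero ℱ L hint F F₀ hFne (hmin F hF), mul_zero])
        (fun h => absurd hF₀ h)] at hev
      exact (mul_eq_zero.mp hev).resolve_right (gne ℱ L F₀)
    by_cases hiF : i = F₀
    · rw [hiF]; exact h0
    · refine ih (t.erase F₀) (Finset.erase_ssubset hF₀) c ?_ i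
        (Finset.mem_erase.mpr ⟨hiF, hi⟩)
      rw [← Finset.add_sum_erase t _ hF₀, h0, zero_smul, zero_add] at hsum
      exact hsum

end ABSShadow

/-- Shadow form of the multilevel non-shadow ABS theorem:
`|ℱ| ≤ Σ_{j=s−r+1}^{s} |∂_j ℱ|`. -/
theorem stmt7 (n r s : ℕ) (hr : 1 ≤ r) (hrs : r ≤ s)
    (K L : Finset ℕ) (hKcard : K.card = r) (hLcard : L.card = s)
    (hgap : ∀ k ∈ K, s - r < k)
    (ℱ : Finset (Finset (Fin n)))
    (hℱK : ∀ F ∈ ℱ, F.card ∈ K)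
    (hint : ∀ A ∈ ℱ, ∀ B ∈ ℱ, A ≠ B → (A ∩ B).card ∈ L) :
    ℱ.card ≤ ∑ j ∈ Finset.Icc (s - r + 1) s, (shadow' n j ℱ).card := by
  classical
  open ABSShadow in
  set G : Finset (Finset (Fin n)) :=
    (Finset.Icc (s - r + 1) s).biUnion (fun j => shadow' n j ℱ) with hG
  have memG : ∀ T : Finset (Fin n),
      T ∈ G ↔ ((∃ F ∈ ℱ, T ⊆ F) ∧ s - r + 1 ≤ T.card ∧ T.card ≤ s) := by
    intro T
    simp only [hG, Finset.mem_biUnion, Finset.mem_Icc, shadow', Finset.mem_filter,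
      Finset.mem_powersetCard_univ]
    constructor
    · rintro ⟨j, ⟨hj1, hj2⟩, hTc, hsh⟩
      exact ⟨hsh, hTc ▸ hj1, hTc ▸ hj2⟩
    · rintro ⟨hsh, h1, h2⟩
      exact ⟨T.card, ⟨h1, h2⟩, rfl, hsh⟩
  have hset : ABSShadow.genSet ℱ r s = ↑(G.image (ABSShadow.E ℱ)) := by
    have hsets : {T : Finset (Fin n) | (∃ F ∈ ℱ, T ⊆ F) ∧ s - r + 1 ≤ T.card ∧ T.card ≤ s}
        = (↑G : Set (Finset (Fin n))) := by
      ext T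
      rw [Set.mem_setOf_eq, Finset.mem_coe, memG]
    rw [Finset.coe_image]
    unfold ABSShadow.genSet
    rw [hsets]
  set W : Submodule ℝ (↥ℱ → ℝ) := Submodule.span ℝ (ABSShadow.genSet ℱ r s) with hW
  have hfin : FiniteDimensional ℝ W := by
    rw [hW, hset]
    exact FiniteDimensional.span_of_finite ℝ (Finset.finite_toSet _)
  have hv : LinearIndependent ℝ
      (fun F : ↥ℱ => (⟨ABSShadow.gfun ℱ L (F : Finset (Fin n)),
        ABSShadow.gmem ℱ r s K L hr hrs hKcard hLcard hgap hℱK _⟩ : W)) := by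
    apply LinearIndependent.of_comp W.subtype
    exact ABSShadow.gindep ℱ L hint
  have hle1 : ℱ.card ≤ Module.finrank ℝ W := by
    have := hv.fintype_card_le_finrank
    rwa [Fintype.card_coe] at this
  have hle2 : Module.finrank ℝ W ≤ (G.image (ABSShadow.E ℱ)).card := by
    rw [hW, hset]
    exact finrank_span_finset_le_card _
  calc ℱ.card ≤ (G.image (ABSShadow.E ℱ)).card := hle1.trans hle2
    _ ≤ G.card := Finset.card_image_le
    _ ≤ ∑ j ∈ Finset.Icc (s - r + 1) s, (shadow' n j ℱ).card := Finset.card_biUnion_le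
end

section
/- Let p be prime, K, L ⊆ {0,…,p−1} disjoint with |K| = r, |L| = s, and k > s − r ≥ 0 for every k ∈ K. If ℱ ⊆ 2^[n] satisfies |F| mod p ∈ K for every F ∈ ℱ and |E ∩ F| mod p ∈ L for all distinct E, F ∈ ℱ, then |ℱ| + Σ_{j=s−r+1}^{s} |𝒩_j(ℱ)| ≤ Σ_{i=s−r+1}^{s} C(n,i). -/
namespace Stmt9Aux

open Finset Module Submodule

variable {p n : ℕ}

/-- Indicator function of `T ⊆ ·`. -/
def chi (p n : ℕ) (T : Finset (Fin n)) : Finset (Fin n) → ZMod p :=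
  fun S => if T ⊆ S then 1 else 0

/-- Span of the indicators of sets of size at most `d`. -/
def Wsp (p n d : ℕ) : Submodule (ZMod p) (Finset (Fin n) → ZMod p) :=
  Submodule.span (ZMod p) (chi p n '' {T | T.card ≤ d})

lemma Wsp_mono {d d' : ℕ} (h : d ≤ d') : Wsp p n d ≤ Wsp p n d' :=
  Submodule.span_mono (Set.image_mono fun _ hT => le_trans hT h)

lemma chi_mem {d : ℕ} {T : Finset (Fin n)} (h : T.card ≤ d) : chi p n T ∈ Wsp p n d :=
  Submodule.subset_span ⟨T, h, rfl⟩

lemma card_inter_cast (A S : Finset (Fin n)) :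
    ((A ∩ S).card : ZMod p) = ∑ i ∈ A, if i ∈ S then (1 : ZMod p) else 0 := by
  classical
  rw [← Finset.filter_mem_eq_inter, Finset.card_filter]
  push_cast
  rfl

lemma mul_lin_mem {d : ℕ} (A : Finset (Fin n)) (c : ZMod p)
    {f : Finset (Fin n) → ZMod p} (hf : f ∈ Wsp p n d) :
    (fun S => (((A ∩ S).card : ZMod p) - c) * f S) ∈ Wsp p n (d + 1) := by
  classical
  induction hf using Submodule.span_induction with
  | mem x hx =>
    obtain ⟨T, hT, rfl⟩ := hx
    have hfun : (fun S => (((A ∩ S).card : ZMod p) - c) * chi p n T S)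
        = (∑ i ∈ A, chi p n (insert i T)) - c • chi p n T := by
      funext S
      simp only [Pi.sub_apply, Finset.sum_apply, Pi.smul_apply, smul_eq_mul, chi]
      by_cases hTS : T ⊆ S
      · rw [if_pos hTS, mul_one]
        have hterm : ∀ i ∈ A, (if insert i T ⊆ S then (1 : ZMod p) else 0)
            = if i ∈ S then 1 else 0 := by
          intro i _
          by_cases hiS : i ∈ S
          · simp [Finset.insert_subset_iff, hiS, hTS]
          · simp [Finset.insert_subset_iff, hiS]
        rw [Finset.sum_congr rfl hterm, ← card_inter_cast, mul_one]
      · rw [if_neg hTS, mul_zero, mul_zero, sub_zero]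
        symm
        refine Finset.sum_eq_zero fun i _ => ?_
        rw [if_neg]
        intro hsub
        exact hTS (subset_trans (Finset.subset_insert i T) hsub)
    rw [hfun]
    refine Submodule.sub_mem _ (Submodule.sum_mem _ fun i _ => ?_)
      (Submodule.smul_mem _ _ (Wsp_mono (Nat.le_succ d) (chi_mem hT)))
    exact chi_mem (le_trans (Finset.card_insert_le i T) (Nat.add_le_add_right hT 1))
  | zero =>
    have : (fun S => (((A ∩ S).card : ZMod p) - c) * (0 : Finset (Fin n) → ZMod p) S)
        = (0 : Finset (Fin n) → ZMod p) := by
      funext S; simp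
    rw [this]; exact Submodule.zero_mem _
  | add x y hx hy ihx ihy =>
    have : (fun S => (((A ∩ S).card : ZMod p) - c) * (x + y) S)
        = (fun S => (((A ∩ S).card : ZMod p) - c) * x S)
          + fun S => (((A ∩ S).card : ZMod p) - c) * y S := by
      funext S; simp [mul_add]
    rw [this]; exact Submodule.add_mem _ ihx ihy
  | smul a x hx ih =>
    have : (fun S => (((A ∩ S).card : ZMod p) - c) * (a • x) S)
        = a • fun S => (((A ∩ S).card : ZMod p) - c) * x S := by
      funext S
      simp only [Pi.smul_apply, smul_eq_mul]
      ring
    rw [this]; exact Submodule.smul_mem _ _ ih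

lemma prodL_mem (L : Finset ℕ) (A : Finset (Fin n)) :
    (fun S => ∏ ℓ ∈ L, (((A ∩ S).card : ZMod p) - (ℓ : ZMod p))) ∈ Wsp p n L.card := by
  classical
  induction L using Finset.induction with
  | empty =>
    have : (fun S : Finset (Fin n) =>
        ∏ ℓ ∈ (∅ : Finset ℕ), (((A ∩ S).card : ZMod p) - (ℓ : ZMod p))) = chi p n ∅ := by
      funext S; simp [chi]
    rw [this]
    exact chi_mem (by simp)
  | @insert a L ha ih =>
    have hfun : (fun S => ∏ ℓ ∈ insert a L, (((A ∩ S).card : ZMod p) - (ℓ : ZMod p)))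
        = fun S => (((A ∩ S).card : ZMod p) - (a : ZMod p))
            * ∏ ℓ ∈ L, (((A ∩ S).card : ZMod p) - (ℓ : ZMod p)) := by
      funext S; rw [Finset.prod_insert ha]
    rw [hfun, Finset.card_insert_of_notMem ha]
    exact mul_lin_mem A _ ih

lemma gI_mem (K : Finset ℕ) (I : Finset (Fin n)) :
    (fun S => chi p n I S * ∏ k ∈ K, ((S.card : ZMod p) - (k : ZMod p)))
      ∈ Wsp p n (I.card + K.card) := by
  classical
  induction K using Finset.induction with
  | empty =>
    have : (fun S => chi p n I S * ∏ k ∈ (∅ : Finset ℕ), ((S.card : ZMod p) - (k : ZMod p)))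
        = chi p n I := by
      funext S; simp
    rw [this]; exact chi_mem (by simp)
  | @insert a K ha ih =>
    have hfun : (fun S => chi p n I S * ∏ k ∈ insert a K, ((S.card : ZMod p) - (k : ZMod p)))
        = fun S => (((Finset.univ ∩ S).card : ZMod p) - (a : ZMod p))
            * (chi p n I S * ∏ k ∈ K, ((S.card : ZMod p) - (k : ZMod p))) := by
      funext S
      rw [Finset.prod_insert ha, Finset.univ_inter]
      ring
    have hcard : I.card + (insert a K).card = (I.card + K.card) + 1 := by
      rw [Finset.card_insert_of_notMem ha]; omega
    rw [hfun, hcard]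
    exact mul_lin_mem Finset.univ _ ih

lemma triangular (𝒮 : Finset (Finset (Fin n))) (c : Finset (Fin n) → ZMod p)
    (h : ∀ S ∈ 𝒮, ∑ T ∈ 𝒮, c T * chi p n T S = 0) : ∀ T ∈ 𝒮, c T = 0 := by
  classical
  by_contra hcon
  push_neg at hcon
  obtain ⟨T, hT, hcT⟩ := hcon
  have hne : (𝒮.filter (fun T => c T ≠ 0)).Nonempty := ⟨T, Finset.mem_filter.2 ⟨hT, hcT⟩⟩
  obtain ⟨T₀, hT₀, hmin⟩ := Finset.exists_min_image _ Finset.card hne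
  rw [Finset.mem_filter] at hT₀
  have heq := h T₀ hT₀.1
  rw [Finset.sum_eq_single T₀ ?_ ?_] at heq
  · rw [chi, if_pos (Finset.Subset.refl T₀), mul_one] at heq
    exact hT₀.2 heq
  · intro T' hT' hne'
    by_cases hc : c T' = 0
    · rw [hc, zero_mul]
    · rw [chi, if_neg, mul_zero]
      intro hsub
      exact hne' (Finset.eq_of_subset_of_card_le hsub
        (hmin T' (Finset.mem_filter.2 ⟨hT', hc⟩)))
  · intro h'; exact absurd hT₀.1 h'

lemma card_filter_card_le (n m : ℕ) :
    ((Finset.univ : Finset (Finset (Fin n))).filter (fun T => T.card ≤ m)).card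
      = ∑ i ∈ Finset.Iic m, n.choose i := by
  classical
  have hset : (Finset.univ : Finset (Finset (Fin n))).filter (fun T => T.card ≤ m)
      = (Finset.Iic m).biUnion (fun i => Finset.powersetCard i Finset.univ) := by
    ext T
    simp only [Finset.mem_filter, Finset.mem_univ, true_and, Finset.mem_biUnion,
      Finset.mem_Iic, Finset.mem_powersetCard]
    constructor
    · intro h; exact ⟨T.card, h, Finset.subset_univ T, rfl⟩
    · rintro ⟨i, hi, _, rfl⟩; exact hi
  rw [hset, Finset.card_biUnion]
  · refine Finset.sum_congr rfl fun i _ => ?_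
    rw [Finset.card_powersetCard, Finset.card_univ, Fintype.card_fin]
  · intro i _ j _ hij
    rw [Function.onFun, Finset.disjoint_left]
    intro T hTi hTj
    rw [Finset.mem_powersetCard] at hTi hTj
    exact hij (hTi.2 ▸ hTj.2.symm ▸ rfl)

end Stmt9Aux

/-- Modular non-shadow variant of the ABS theorem under the low-level exclusion
hypothesis `k > s − r` for every `k ∈ K`. -/
theorem stmt9 (p n r s : ℕ) (hp : p.Prime)
    (K L : Finset ℕ) (hKp : ∀ k ∈ K, k < p) (hLp : ∀ ℓ ∈ L, ℓ < p)
    (hdisj : Disjoint K L) (hKcard : K.card = r) (hLcard : L.card = s)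
    (hrs : r ≤ s) (hgap : ∀ k ∈ K, s - r < k)
    (ℱ : Finset (Finset (Fin n)))
    (hℱK : ∀ F ∈ ℱ, F.card % p ∈ K)
    (hint : ∀ E ∈ ℱ, ∀ F ∈ ℱ, E ≠ F → (E ∩ F).card % p ∈ L) :
    ℱ.card + ∑ j ∈ Finset.Icc (s - r + 1) s, (nonShadow n j ℱ).card
      ≤ ∑ i ∈ Finset.Icc (s - r + 1) s, n.choose i := by
  classical
  haveI : Fact p.Prime := ⟨hp⟩
  open Finset Module Submodule Stmt9Aux in
  set d := s - r with hd
  -- the families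
  set N : Finset (Finset (Fin n)) :=
    (Finset.Icc (d + 1) s).biUnion (fun j => nonShadow n j ℱ) with hN
  set Ismall : Finset (Finset (Fin n)) :=
    (Finset.univ : Finset (Finset (Fin n))).filter (fun I => I.card ≤ d) with hIs
  -- the vectors
  set fF : Finset (Fin n) → Finset (Fin n) → ZMod p :=
    fun F S => ∏ ℓ ∈ L, (((F ∩ S).card : ZMod p) - (ℓ : ZMod p)) with hfF
  set gI : Finset (Fin n) → Finset (Fin n) → ZMod p :=
    fun I S => Stmt9Aux.chi p n I S * ∏ k ∈ K, ((S.card : ZMod p) - (k : ZMod p)) with hgI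
  set v : (({F // F ∈ ℱ} ⊕ {T // T ∈ N}) ⊕ {I // I ∈ Ismall}) → (Finset (Fin n) → ZMod p) :=
    fun i => match i with
      | Sum.inl (Sum.inl F) => fF F.1
      | Sum.inl (Sum.inr T) => Stmt9Aux.chi p n T.1
      | Sum.inr I => gI I.1
    with hv
  -- cast helpers
  have hcast_ne : ∀ m k : ℕ, k < p → m % p ≠ k → ((m : ZMod p) - (k : ZMod p)) ≠ 0 := by
    intro m k hk hne h0
    rw [sub_eq_zero, ZMod.natCast_eq_natCast_iff', Nat.mod_eq_of_lt hk] at h0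
    exact hne h0
  have hcast_eq : ∀ m k : ℕ, k = m % p → ((m : ZMod p) - (k : ZMod p)) = 0 := by
    intro m k hk
    rw [sub_eq_zero, hk, ZMod.natCast_mod]
  -- membership in N gives cards
  have hmemN : ∀ T ∈ N, d + 1 ≤ T.card ∧ T.card ≤ s ∧ ∀ F ∈ ℱ, ¬ T ⊆ F := by
    intro T hT
    rw [hN, Finset.mem_biUnion] at hT
    obtain ⟨j, hj, hTj⟩ := hT
    rw [Finset.mem_Icc] at hj
    rw [nonShadow, Finset.mem_filter, Finset.mem_powersetCard] at hTj
    exact ⟨hTj.1.2 ▸ hj.1, hTj.1.2 ▸ hj.2, hTj.2⟩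
  -- evaluations
  have ev_fF_self : ∀ F ∈ ℱ, fF F F ≠ 0 := by
    intro F hF
    rw [hfF]
    refine Finset.prod_ne_zero_iff.2 fun ℓ hℓ => ?_
    rw [Finset.inter_self]
    refine hcast_ne _ _ (hLp ℓ hℓ) ?_
    intro he
    exact Finset.disjoint_left.1 hdisj (hℱK F hF) (he ▸ hℓ)
  have ev_fF_ne : ∀ F ∈ ℱ, ∀ F₀ ∈ ℱ, F ≠ F₀ → fF F F₀ = 0 := by
    intro F hF F₀ hF₀ hne
    rw [hfF]
    exact Finset.prod_eq_zero (hint F hF F₀ hF₀ hne) (hcast_eq _ _ rfl)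
  have ev_gI_F : ∀ I : Finset (Fin n), ∀ F₀ ∈ ℱ, gI I F₀ = 0 := by
    intro I F₀ hF₀
    rw [hgI]
    have : (∏ k ∈ K, ((F₀.card : ZMod p) - (k : ZMod p))) = 0 :=
      Finset.prod_eq_zero (hℱK F₀ hF₀) (hcast_eq _ _ rfl)
    simp [this]
  -- linear independence
  have hli : LinearIndependent (ZMod p) v := by
    rw [Fintype.linearIndependent_iff]
    intro g hg
    have hgS : ∀ S, ((∑ i₁ : {F // F ∈ ℱ}, g (Sum.inl (Sum.inl i₁)) * v (Sum.inl (Sum.inl i₁)) S)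
          + ∑ i₂ : {T // T ∈ N}, g (Sum.inl (Sum.inr i₂)) * v (Sum.inl (Sum.inr i₂)) S)
          + ∑ i₃ : {I // I ∈ Ismall}, g (Sum.inr i₃) * v (Sum.inr i₃) S = 0 := by
      intro S
      have h0 := congrFun hg S
      simpa [Fintype.sum_sum_type, Finset.sum_apply, Pi.smul_apply, smul_eq_mul] using h0
    -- Step 1 : coefficients on ℱ vanish
    have step1 : ∀ i₁ : {F // F ∈ ℱ}, g (Sum.inl (Sum.inl i₁)) = 0 := by
      intro F₀
      have h := hgS F₀.1
      have hB : ∀ i₂ : {T // T ∈ N}, g (Sum.inl (Sum.inr i₂)) * v (Sum.inl (Sum.inr i₂)) F₀.1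
          = 0 := by
        intro T
        have := (hmemN T.1 T.2).2.2 F₀.1 F₀.2
        simp [hv, Stmt9Aux.chi, this]
      have hC : ∀ i₃ : {I // I ∈ Ismall}, g (Sum.inr i₃) * v (Sum.inr i₃) F₀.1 = 0 := by
        intro I
        simp [hv, ev_gI_F I.1 F₀.1 F₀.2]
      rw [Finset.sum_eq_zero (fun i _ => hB i), Finset.sum_eq_zero (fun i _ => hC i),
        add_zero, add_zero] at h
      rw [Fintype.sum_eq_single F₀ ?_] at h
      · have := ev_fF_self F₀.1 F₀.2
        rcases mul_eq_zero.1 h with h' | h'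
        · exact h'
        · exact absurd h' this
      · intro F hFne
        have : F.1 ≠ F₀.1 := fun he => hFne (Subtype.ext he)
        simp [hv, ev_fF_ne F.1 F.2 F₀.1 F₀.2 this]
    -- Step 2 : coefficients on Ismall vanish
    have step2 : ∀ i₃ : {I // I ∈ Ismall}, g (Sum.inr i₃) = 0 := by
      have key : ∀ I ∈ Ismall,
          (fun J => if h : J ∈ Ismall then g (Sum.inr ⟨J, h⟩) else 0) I = 0 := by
        refine Stmt9Aux.triangular Ismall _ ?_
        intro S hS
        have hScard : S.card ≤ d := (Finset.mem_filter.1 hS).2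
        have h := hgS S
        have hA : ∀ i₁ : {F // F ∈ ℱ},
            g (Sum.inl (Sum.inl i₁)) * v (Sum.inl (Sum.inl i₁)) S = 0 := by
          intro F; rw [step1 F, zero_mul]
        have hB : ∀ i₂ : {T // T ∈ N}, g (Sum.inl (Sum.inr i₂)) * v (Sum.inl (Sum.inr i₂)) S
            = 0 := by
          intro T
          have hTc := (hmemN T.1 T.2).1
          have : ¬ T.1 ⊆ S := by
            intro hsub
            have := Finset.card_le_card hsub
            omega
          simp [hv, Stmt9Aux.chi, this]
        rw [Finset.sum_eq_zero (fun i _ => hA i), Finset.sum_eq_zero (fun i _ => hB i),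
          add_zero, zero_add] at h
        -- factor the constant ∏ k ∈ K, (S.card - k)
        have hfactor : ∀ i₃ : {I // I ∈ Ismall}, g (Sum.inr i₃) * v (Sum.inr i₃) S
            = (g (Sum.inr i₃) * Stmt9Aux.chi p n i₃.1 S)
              * ∏ k ∈ K, ((S.card : ZMod p) - (k : ZMod p)) := by
          intro I; simp [hv, hgI]; ring
        rw [Finset.sum_congr rfl (fun i _ => hfactor i), ← Finset.sum_mul] at h
        have hK0 : (∏ k ∈ K, ((S.card : ZMod p) - (k : ZMod p))) ≠ 0 := by
          refine Finset.prod_ne_zero_iff.2 fun k hk => ?_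
          have hk1 := hKp k hk
          have hk2 := hgap k hk
          refine hcast_ne _ _ hk1 ?_
          rw [Nat.mod_eq_of_lt (by omega)]
          omega
        have hsum0 : (∑ i₃ : {I // I ∈ Ismall}, g (Sum.inr i₃) * Stmt9Aux.chi p n i₃.1 S)
            = 0 := by
          rcases mul_eq_zero.1 h with h' | h'
          · exact h'
          · exact absurd h' hK0
        rw [Finset.univ_eq_attach] at hsum0
        calc ∑ T ∈ Ismall, (if h : T ∈ Ismall then g (Sum.inr ⟨T, h⟩) else 0)
                * Stmt9Aux.chi p n T S
            = ∑ T ∈ Ismall.attach, (if h : T.1 ∈ Ismall then g (Sum.inr ⟨T.1, h⟩) else 0)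
                * Stmt9Aux.chi p n T.1 S := (Finset.sum_attach _ _).symm
          _ = ∑ T ∈ Ismall.attach, g (Sum.inr T) * Stmt9Aux.chi p n T.1 S := by
              refine Finset.sum_congr rfl fun T _ => ?_
              rw [dif_pos T.2]
          _ = 0 := hsum0
      intro I
      have h' := key I.1 I.2
      simp only [dif_pos I.2] at h'
      exact h'
    -- Step 3 : coefficients on N vanish
    have step3 : ∀ i₂ : {T // T ∈ N}, g (Sum.inl (Sum.inr i₂)) = 0 := by
      have key : ∀ T ∈ N,
          (fun J => if h : J ∈ N then g (Sum.inl (Sum.inr ⟨J, h⟩)) else 0) T = 0 := by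
        refine Stmt9Aux.triangular N _ ?_
        intro S _
        have h := hgS S
        have hA : ∀ i₁ : {F // F ∈ ℱ},
            g (Sum.inl (Sum.inl i₁)) * v (Sum.inl (Sum.inl i₁)) S = 0 := by
          intro F; rw [step1 F, zero_mul]
        have hC : ∀ i₃ : {I // I ∈ Ismall}, g (Sum.inr i₃) * v (Sum.inr i₃) S = 0 := by
          intro I; rw [step2 I, zero_mul]
        rw [Finset.sum_eq_zero (fun i _ => hA i), Finset.sum_eq_zero (fun i _ => hC i),
          add_zero, zero_add] at h
        rw [Finset.univ_eq_attach] at h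
        calc ∑ T ∈ N, (if h : T ∈ N then g (Sum.inl (Sum.inr ⟨T, h⟩)) else 0)
                * Stmt9Aux.chi p n T S
            = ∑ T ∈ N.attach, (if h : T.1 ∈ N then g (Sum.inl (Sum.inr ⟨T.1, h⟩)) else 0)
                * Stmt9Aux.chi p n T.1 S := (Finset.sum_attach _ _).symm
          _ = ∑ T ∈ N.attach, g (Sum.inl (Sum.inr T)) * Stmt9Aux.chi p n T.1 S := by
              refine Finset.sum_congr rfl fun T _ => ?_
              rw [dif_pos T.2]
          _ = 0 := h
      intro T
      have h' := key T.1 T.2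
      simp only [dif_pos T.2] at h'
      exact h'
    intro i
    match i with
    | Sum.inl (Sum.inl F) => exact step1 F
    | Sum.inl (Sum.inr T) => exact step3 T
    | Sum.inr I => exact step2 I
  -- all vectors lie in Wsp p n s
  have hspan_le : Submodule.span (ZMod p) (Set.range v) ≤ Stmt9Aux.Wsp p n s := by
    rw [Submodule.span_le]
    rintro _ ⟨i, rfl⟩
    match i with
    | Sum.inl (Sum.inl F) =>
      have := Stmt9Aux.prodL_mem (p := p) L F.1
      rw [hLcard] at this
      exact this
    | Sum.inl (Sum.inr T) =>
      exact Stmt9Aux.chi_mem (hmemN T.1 T.2).2.1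
    | Sum.inr I =>
      have h1 := Stmt9Aux.gI_mem (p := p) K I.1
      have h2 : I.1.card + K.card ≤ s := by
        have := (Finset.mem_filter.1 I.2).2
        rw [hKcard]
        omega
      exact Stmt9Aux.Wsp_mono h2 h1
  -- dimension count
  have hcard_ι : Fintype.card (({F // F ∈ ℱ} ⊕ {T // T ∈ N}) ⊕ {I // I ∈ Ismall})
      = ℱ.card + N.card + Ismall.card := by
    simp [Fintype.card_sum, Fintype.card_coe]
  have hWsp_rank : Module.finrank (ZMod p) (Stmt9Aux.Wsp p n s)
      ≤ ∑ i ∈ Finset.Iic s, n.choose i := by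
    set 𝒯 : Finset (Finset (Fin n)) :=
      (Finset.univ : Finset (Finset (Fin n))).filter (fun T => T.card ≤ s) with h𝒯
    have him : ((𝒯.image (Stmt9Aux.chi p n) : Finset (Finset (Fin n) → ZMod p)) : Set _)
        = Stmt9Aux.chi p n '' {T | T.card ≤ s} := by
      rw [Finset.coe_image]
      ext T
      simp [h𝒯]
    have h1 : Module.finrank (ZMod p) (Stmt9Aux.Wsp p n s)
        ≤ (𝒯.image (Stmt9Aux.chi p n)).card := by
      have := finrank_span_finset_le_card (R := ZMod p) (𝒯.image (Stmt9Aux.chi p n))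
      rw [Set.finrank, him] at this
      exact this
    calc Module.finrank (ZMod p) (Stmt9Aux.Wsp p n s)
        ≤ (𝒯.image (Stmt9Aux.chi p n)).card := h1
      _ ≤ 𝒯.card := Finset.card_image_le
      _ = ∑ i ∈ Finset.Iic s, n.choose i := Stmt9Aux.card_filter_card_le n s
  have hmain : ℱ.card + N.card + Ismall.card ≤ ∑ i ∈ Finset.Iic s, n.choose i := by
    rw [← hcard_ι]
    calc Fintype.card (({F // F ∈ ℱ} ⊕ {T // T ∈ N}) ⊕ {I // I ∈ Ismall})
        = Module.finrank (ZMod p) (Submodule.span (ZMod p) (Set.range v)) :=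
          (finrank_span_eq_card hli).symm
      _ ≤ Module.finrank (ZMod p) (Stmt9Aux.Wsp p n s) := Submodule.finrank_mono hspan_le
      _ ≤ ∑ i ∈ Finset.Iic s, n.choose i := hWsp_rank
  -- counting the pieces
  have hNcard : N.card = ∑ j ∈ Finset.Icc (d + 1) s, (nonShadow n j ℱ).card := by
    rw [hN]
    refine Finset.card_biUnion ?_
    intro i _ j _ hij
    rw [Function.onFun, Finset.disjoint_left]
    intro T hTi hTj
    rw [nonShadow, Finset.mem_filter, Finset.mem_powersetCard] at hTi hTj
    exact hij (hTi.1.2 ▸ hTj.1.2.symm ▸ rfl)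
  have hIcard : Ismall.card = ∑ i ∈ Finset.Iic d, n.choose i :=
    Stmt9Aux.card_filter_card_le n d
  have hsplit : ∑ i ∈ Finset.Iic s, n.choose i
      = (∑ i ∈ Finset.Iic d, n.choose i) + ∑ i ∈ Finset.Icc (d + 1) s, n.choose i := by
    rw [← Finset.sum_union]
    · congr 1
      ext x
      simp only [Finset.mem_union, Finset.mem_Iic, Finset.mem_Icc]
      omega
    · rw [Finset.disjoint_left]
      intro x hx hx'
      rw [Finset.mem_Iic] at hx
      rw [Finset.mem_Icc] at hx'
      omega
  rw [hNcard, hIcard, hsplit] at hmain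
  omega
end

section
/- Let p be prime, 1 ≤ s ≤ p−1, L ⊆ 𝔽_p with |L| = s, and K ⊆ 𝔽_p ∖ L. Write P_L(t) = ∏_{ℓ∈L}(t − ℓ) = Σ_{j=0}^s c_j(L)·C(t,j) in 𝔽_p[t], and let bsupp(L) = {j : c_j(L) ≠ 0}. If ℱ ⊆ 2^[n] satisfies |F| mod p ∈ K for every F ∈ ℱ and |E ∩ F| mod p ∈ L for all distinct E, F ∈ ℱ, then |ℱ| ≤ Σ_{j∈bsupp(L)} C(n,j). -/
open Polynomial

/-- The binomial polynomial `C(t,j) = t(t−1)⋯(t−j+1)/j!` over `ZMod p`. -/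
noncomputable def binomPoly (p j : ℕ) : Polynomial (ZMod p) :=
  Polynomial.C ((j.factorial : ZMod p))⁻¹ * descPochhammer (ZMod p) j

/-- Coefficient-sensitive modular intersection bound:
`|ℱ| ≤ Σ_{j ∈ bsupp(L)} C(n,j)`. -/
theorem stmt11 (p n s : ℕ) (hp : p.Prime) (hs1 : 1 ≤ s) (hs2 : s ≤ p - 1)
    (L K : Finset (ZMod p)) (hLcard : L.card = s) (hKL : Disjoint K L)
    (c : ℕ → ZMod p)
    (hc : ∏ ℓ ∈ L, (X - Polynomial.C ℓ) =
      ∑ j ∈ Finset.range (s + 1), c j • binomPoly p j)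
    (ℱ : Finset (Finset (Fin n)))
    (hℱK : ∀ F ∈ ℱ, (F.card : ZMod p) ∈ K)
    (hint : ∀ E ∈ ℱ, ∀ F ∈ ℱ, E ≠ F → ((E ∩ F).card : ZMod p) ∈ L) :
    ℱ.card ≤ ∑ j ∈ (Finset.range (s + 1)).filter (fun j => c j ≠ 0), n.choose j := by
  classical
  haveI : Fact p.Prime := ⟨hp⟩
  have hps : s < p := by have := hp.two_le; omega
  set P : Polynomial (ZMod p) := ∏ ℓ ∈ L, (X - Polynomial.C ℓ) with hP
  set bs : Finset ℕ := (Finset.range (s+1)).filter (fun j => c j ≠ 0) with hbsdef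
  have hPeval : ∀ a : ZMod p, P.eval a = ∏ ℓ ∈ L, (a - ℓ) := by
    intro a; simp [hP, Polynomial.eval_prod]
  have hPzero : ∀ a ∈ L, P.eval a = 0 := by
    intro a ha; rw [hPeval]; exact Finset.prod_eq_zero ha (by simp)
  have hPne : ∀ a ∈ K, P.eval a ≠ 0 := by
    intro a ha
    rw [hPeval]
    refine Finset.prod_ne_zero_iff.mpr fun ℓ hℓ h => ?_
    have : a = ℓ := sub_eq_zero.mp h
    exact absurd ha (by rw [this]; exact Finset.disjoint_right.mp hKL hℓ)
  have hbin : ∀ j ∈ Finset.range (s+1), ∀ m : ℕ,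
      (binomPoly p j).eval (m : ZMod p) = (m.choose j : ZMod p) := by
    intro j hj m
    have hjs : j ≤ s := by simp only [Finset.mem_range] at hj; omega
    have hfac : (j.factorial : ZMod p) ≠ 0 := by
      rw [Ne, ZMod.natCast_eq_zero_iff]
      intro h
      exact absurd ((Nat.Prime.dvd_factorial hp).mp h) (by omega)
    rw [binomPoly, Polynomial.eval_mul, Polynomial.eval_C,
      descPochhammer_eval_eq_descFactorial,
      Nat.descFactorial_eq_factorial_mul_choose, Nat.cast_mul, ← mul_assoc,
      inv_mul_cancel₀ hfac, one_mul]
  -- indicator functions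
  let e : Finset (Fin n) → (Finset (Fin n) → ZMod p) := fun S G => if S ⊆ G then 1 else 0
  let f : Finset (Fin n) → (Finset (Fin n) → ZMod p) :=
    fun F G => P.eval ((F ∩ G).card : ZMod p)
  have hchoose : ∀ (F G : Finset (Fin n)) (j : ℕ),
      ((F ∩ G).card.choose j : ZMod p) = ∑ S ∈ F.powersetCard j, e S G := by
    intro F G j
    have h1 : (F ∩ G).powersetCard j = (F.powersetCard j).filter (fun S => S ⊆ G) := by
      ext S
      simp only [Finset.mem_powersetCard, Finset.mem_filter, Finset.subset_inter_iff]
      tauto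
    have h2 : (∑ S ∈ F.powersetCard j, e S G)
        = ((F.powersetCard j).filter (fun S => S ⊆ G)).card := by
      rw [Finset.card_eq_sum_ones, Nat.cast_sum, Finset.sum_filter]
      simp [e]
    rw [h2, ← h1, Finset.card_powersetCard]
  have key : ∀ F G, f F G = ∑ j ∈ bs, ∑ S ∈ F.powersetCard j, c j * e S G := by
    intro F G
    have : f F G = ∑ j ∈ Finset.range (s+1), c j * ((F ∩ G).card.choose j : ZMod p) := by
      show P.eval _ = _
      rw [hc, Polynomial.eval_finset_sum]
      refine Finset.sum_congr rfl fun j hj => ?_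
      rw [Polynomial.smul_eq_C_mul, Polynomial.eval_mul, Polynomial.eval_C, hbin j hj]
    rw [this, hbsdef, Finset.sum_filter]
    refine Finset.sum_congr rfl fun j _ => ?_
    by_cases h : c j = 0
    · simp [h]
    · rw [if_pos h, hchoose, Finset.mul_sum]
  -- span
  let 𝒮 : Finset (Finset (Fin n)) := bs.biUnion (fun j => (Finset.univ : Finset (Fin n)).powersetCard j)
  let T : Finset (Finset (Fin n) → ZMod p) := 𝒮.image e
  let V : Submodule (ZMod p) (Finset (Fin n) → ZMod p) := Submodule.span (ZMod p) (T : Set _)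
  have hmem : ∀ F, f F ∈ V := by
    intro F
    have : f F = ∑ j ∈ bs, ∑ S ∈ F.powersetCard j, c j • e S := by
      funext G
      rw [key]
      simp [Finset.sum_apply]
    rw [this]
    refine Submodule.sum_mem _ fun j hj => Submodule.sum_mem _ fun S hS => ?_
    refine Submodule.smul_mem _ _ (Submodule.subset_span ?_)
    simp only [T, Finset.coe_image, Set.mem_image, Finset.mem_coe]
    refine ⟨S, ?_, rfl⟩
    simp only [𝒮, Finset.mem_biUnion]
    exact ⟨j, hj, by simp [Finset.mem_powersetCard, (Finset.mem_powersetCard.mp hS).2]⟩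
  -- linear independence
  let g : {F // F ∈ ℱ} → V := fun F => ⟨f F.1, hmem F.1⟩
  have hli : LinearIndependent (ZMod p) g := by
    have h0 : LinearIndependent (ZMod p) (fun F : {F // F ∈ ℱ} => f F.1) := by
      rw [Fintype.linearIndependent_iff]
      intro a ha F
      have := congrFun ha F.1
      simp only [Finset.sum_apply, Pi.smul_apply, Pi.zero_apply, smul_eq_mul] at this
      rw [Finset.sum_eq_single F] at this
      · have hFF : f F.1 F.1 = P.eval ((F.1).card : ZMod p) := by
          simp [f]
        have hne : f F.1 F.1 ≠ 0 := by
          rw [hFF]; exact hPne _ (hℱK F.1 F.2)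
        exact (mul_eq_zero.mp this).resolve_right hne
      · intro E _ hEF
        have : f E.1 F.1 = 0 := by
          apply hPzero
          exact hint E.1 E.2 F.1 F.2 (fun h => hEF (Subtype.ext h))
        rw [this, mul_zero]
      · intro h; exact absurd (Finset.mem_univ F) h
    exact h0.of_comp V.subtype
  have hcard : ℱ.card ≤ Module.finrank (ZMod p) V := by
    rw [← Fintype.card_coe]
    exact hli.fintype_card_le_finrank
  have hdim : Module.finrank (ZMod p) V ≤ 𝒮.card := by
    refine le_trans (finrank_span_finset_le_card T) (Finset.card_image_le)
  refine hcard.trans (hdim.trans ?_)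
  refine le_trans (Finset.card_biUnion_le) ?_
  refine Finset.sum_le_sum fun j _ => ?_
  rw [Finset.card_powersetCard, Finset.card_univ, Fintype.card_fin]
end

section
/- Under the hypotheses of the coefficient-sensitive modular bound (p prime, 1 ≤ s ≤ p−1, L ⊆ 𝔽_p with |L| = s, K ⊆ 𝔽_p ∖ L, ℱ ⊆ 2^[n] with |F| mod p ∈ K for all F ∈ ℱ and |E ∩ F| mod p ∈ L for distinct E, F ∈ ℱ), one has |ℱ| + Σ_{j∈bsupp(L)} |𝒩_j(ℱ)| ≤ Σ_{j∈bsupp(L)} C(n,j), where 𝒩_j(ℱ) is the set of j-subsets contained in no member of ℱ. -/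
open Polynomial

/-- The indicator vector of "contains `S`". -/
def chiv {n : ℕ} (R : Type*) [CommRing R] (S : Finset (Fin n)) : Finset (Fin n) → R :=
  fun T => if S ⊆ T then 1 else 0

lemma chiv_indep {n : ℕ} {R : Type*} [CommRing R] (t : Finset (Finset (Fin n)))
    (b : Finset (Fin n) → R)
    (h : ∀ T, ∑ S ∈ t, b S * chiv R S T = 0) :
    ∀ S ∈ t, b S = 0 := by
  classical
  by_contra hcon
  push_neg at hcon
  obtain ⟨S1, hS1t, hS1⟩ := hcon
  obtain ⟨S0, hS0, hmin⟩ :=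
    (t.filter (fun S => b S ≠ 0)).exists_min_image Finset.card
      ⟨S1, by simp [hS1t, hS1]⟩
  rw [Finset.mem_filter] at hS0
  have h0 := h S0
  rw [Finset.sum_eq_single_of_mem S0 hS0.1] at h0
  · apply hS0.2
    simpa [chiv] using h0
  · intro S hS hne
    by_cases hb : b S = 0
    · simp [hb]
    · have hSf : S ∈ t.filter (fun S => b S ≠ 0) := by simp [hS, hb]
      have : ¬ S ⊆ S0 := by
        intro hsub
        exact hne (Finset.eq_of_subset_of_card_le hsub (hmin S hSf))
      simp [chiv, this]

lemma chiv_count {n : ℕ} (R : Type*) [CommRing R] (j : ℕ) (F T : Finset (Fin n)) :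
    (((T ∩ F).card.choose j : ℕ) : R) = ∑ S ∈ Finset.powersetCard j F, chiv R S T := by
  unfold chiv
  rw [Finset.sum_boole]
  congr 1
  rw [← Finset.card_powersetCard]
  congr 1
  ext S
  simp only [Finset.mem_filter, Finset.mem_powersetCard, Finset.subset_inter_iff]
  tauto

lemma binomPoly_eval (p j m : ℕ) (hp : p.Prime) (hj : j < p) :
    (binomPoly p j).eval ((m : ZMod p)) = (m.choose j : ZMod p) := by
  haveI : Fact p.Prime := ⟨hp⟩
  have hfac : ((j.factorial : ℕ) : ZMod p) ≠ 0 := by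
    rw [Ne, ZMod.natCast_eq_zero_iff]
    intro hdvd
    exact absurd ((Nat.Prime.dvd_factorial hp).mp hdvd) (not_le.mpr hj)
  rw [binomPoly, eval_mul, eval_C, descPochhammer_eval_eq_descFactorial,
    Nat.descFactorial_eq_factorial_mul_choose]
  push_cast
  rw [← mul_assoc, inv_mul_cancel₀ hfac, one_mul]

/-- Non-shadow refinement of the coefficient-sensitive modular bound:
`|ℱ| + Σ_{j ∈ bsupp(L)} |𝒩_j(ℱ)| ≤ Σ_{j ∈ bsupp(L)} C(n,j)`. -/
theorem stmt12 (p n s : ℕ) (hp : p.Prime) (hs1 : 1 ≤ s) (hs2 : s ≤ p - 1)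
    (L K : Finset (ZMod p)) (hLcard : L.card = s) (hKL : Disjoint K L)
    (c : ℕ → ZMod p)
    (hc : ∏ ℓ ∈ L, (X - Polynomial.C ℓ) =
      ∑ j ∈ Finset.range (s + 1), c j • binomPoly p j)
    (ℱ : Finset (Finset (Fin n)))
    (hℱK : ∀ F ∈ ℱ, (F.card : ZMod p) ∈ K)
    (hint : ∀ E ∈ ℱ, ∀ F ∈ ℱ, E ≠ F → ((E ∩ F).card : ZMod p) ∈ L) :
    ℱ.card + ∑ j ∈ (Finset.range (s + 1)).filter (fun j => c j ≠ 0),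
        (nonShadow n j ℱ).card
      ≤ ∑ j ∈ (Finset.range (s + 1)).filter (fun j => c j ≠ 0), n.choose j := by
  haveI : Fact p.Prime := ⟨hp⟩
  classical
  set bs : Finset ℕ := (Finset.range (s + 1)).filter (fun j => c j ≠ 0) with hbs
  have hp2 : 2 ≤ p := hp.two_le
  have hjp : ∀ j ∈ bs, j < p := by
    intro j hj
    rw [hbs, Finset.mem_filter, Finset.mem_range] at hj
    have : j ≤ s := Nat.lt_succ_iff.mp hj.1
    omega
  set 𝒮 : Finset (Finset (Fin n)) :=
    bs.biUnion (fun j => Finset.powersetCard j Finset.univ) with h𝒮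
  set 𝒩 : Finset (Finset (Fin n)) := bs.biUnion (fun j => nonShadow n j ℱ) with h𝒩
  set P : Polynomial (ZMod p) := ∏ ℓ ∈ L, (X - Polynomial.C ℓ) with hP
  set f : Finset (Fin n) → (Finset (Fin n) → ZMod p) :=
    fun F T => P.eval ((T ∩ F).card : ZMod p) with hf
  -- expansion of f in the chiv basis
  have h_expand : ∀ F T : Finset (Fin n),
      f F T = ∑ j ∈ bs, c j * (((T ∩ F).card.choose j : ℕ) : ZMod p) := by
    intro F T
    have h1 : f F T = ∑ j ∈ Finset.range (s + 1),
        c j * (binomPoly p j).eval (((T ∩ F).card : ZMod p)) := by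
      rw [hf]
      simp only
      rw [hc, eval_finset_sum]
      refine Finset.sum_congr rfl fun j _ => ?_
      rw [smul_eq_C_mul, eval_mul, eval_C]
    rw [h1, ← Finset.sum_filter_of_ne (p := fun j => c j ≠ 0)
      (fun j _ hne => by intro h0; exact hne (by rw [h0, zero_mul]))]
    refine Finset.sum_congr rfl fun j hj => ?_
    rw [binomPoly_eval p j _ hp (hjp j hj)]
  have h_fspan : ∀ F : Finset (Fin n),
      f F = ∑ j ∈ bs, ∑ S ∈ Finset.powersetCard j F, c j • chiv (ZMod p) S := by
    intro F
    funext T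
    rw [h_expand]
    rw [Finset.sum_apply]
    refine Finset.sum_congr rfl fun j _ => ?_
    rw [Finset.sum_apply, chiv_count (ZMod p) j F T, Finset.mul_sum]
    refine Finset.sum_congr rfl fun S _ => ?_
    simp [Pi.smul_apply, smul_eq_mul]
  set t : Finset (Finset (Fin n) → ZMod p) := 𝒮.image (chiv (ZMod p)) with ht
  set W : Submodule (ZMod p) (Finset (Fin n) → ZMod p) :=
    Submodule.span (ZMod p) (t : Set (Finset (Fin n) → ZMod p)) with hW
  have hchiW : ∀ S ∈ 𝒮, chiv (ZMod p) S ∈ W := fun S hS =>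
    Submodule.subset_span (Finset.mem_coe.mpr (Finset.mem_image_of_mem _ hS))
  have hfW : ∀ F : Finset (Fin n), f F ∈ W := by
    intro F
    rw [h_fspan]
    refine Submodule.sum_mem _ fun j hj => Submodule.sum_mem _ fun S hS => ?_
    refine Submodule.smul_mem _ _ (hchiW S ?_)
    rw [h𝒮]
    refine Finset.mem_biUnion.mpr ⟨j, hj, ?_⟩
    rw [Finset.mem_powersetCard] at hS ⊢
    exact ⟨Finset.subset_univ S, hS.2⟩
  have h𝒩sub : ∀ S ∈ 𝒩, S ∈ 𝒮 ∧ ∀ F ∈ ℱ, ¬ S ⊆ F := by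
    intro S hS
    rw [h𝒩, Finset.mem_biUnion] at hS
    obtain ⟨j, hj, hSj⟩ := hS
    rw [nonShadow, Finset.mem_filter] at hSj
    exact ⟨Finset.mem_biUnion.mpr ⟨j, hj, hSj.1⟩, hSj.2⟩
  -- the main family of vectors
  set v : (↥ℱ ⊕ ↥𝒩) → (Finset (Fin n) → ZMod p) :=
    Sum.elim (fun F => f (F : Finset (Fin n))) (fun S => chiv (ZMod p) (S : Finset (Fin n)))
    with hv
  -- P evaluates to zero on L, and nonzero on the sizes in K
  have hPL : ∀ x : ZMod p, x ∈ L → P.eval x = 0 := by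
    intro x hx
    rw [hP, eval_prod]
    refine Finset.prod_eq_zero hx ?_
    rw [eval_sub, eval_X, eval_C, sub_self]
  have hPK : ∀ x : ZMod p, x ∈ K → P.eval x ≠ 0 := by
    intro x hx
    rw [hP, eval_prod]
    rw [Finset.prod_ne_zero_iff]
    intro ℓ hℓ
    rw [eval_sub, eval_X, eval_C, sub_ne_zero]
    intro hxl
    exact Finset.disjoint_left.mp hKL hx (hxl ▸ hℓ)
  have hli : LinearIndependent (ZMod p) v := by
    rw [Fintype.linearIndependent_iff]
    intro g hg
    have hgT : ∀ T : Finset (Fin n),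
        (∑ i : ↥ℱ, g (Sum.inl i) * f (i : Finset (Fin n)) T) +
        (∑ i : ↥𝒩, g (Sum.inr i) * chiv (ZMod p) (i : Finset (Fin n)) T) = 0 := by
      intro T
      have h0 := congrFun hg T
      rw [Finset.sum_apply] at h0
      rw [Fintype.sum_sum_type] at h0
      simpa [hv, Pi.smul_apply, smul_eq_mul] using h0
    -- first: all coefficients on ℱ vanish
    have hinl : ∀ i : ↥ℱ, g (Sum.inl i) = 0 := by
      intro i
      obtain ⟨F0, hF0⟩ := i
      have hT := hgT F0
      have h2 : (∑ i : ↥𝒩, g (Sum.inr i) * chiv (ZMod p) (i : Finset (Fin n)) F0) = 0 := by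
        refine Finset.sum_eq_zero fun i _ => ?_
        have : ¬ (i : Finset (Fin n)) ⊆ F0 := (h𝒩sub _ i.2).2 F0 hF0
        simp [chiv, this]
      rw [h2, add_zero] at hT
      rw [Finset.sum_eq_single_of_mem (⟨F0, hF0⟩ : ↥ℱ) (Finset.mem_univ _)] at hT
      · have hne : f F0 F0 ≠ 0 := by
          rw [hf]
          simp only [Finset.inter_self]
          exact hPK _ (hℱK F0 hF0)
        exact (mul_eq_zero.mp hT).resolve_right hne
      · intro i' _ hne
        have hne' : (i' : Finset (Fin n)) ≠ F0 := by
          intro h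
          exact hne (Subtype.ext h)
        have hzero : f (i' : Finset (Fin n)) F0 = 0 := by
          rw [hf]
          exact hPL _ (hint F0 hF0 (i' : Finset (Fin n)) i'.2 (Ne.symm hne'))
        rw [hzero, mul_zero]
    -- second: all coefficients on 𝒩 vanish
    have hinr : ∀ i : ↥𝒩, g (Sum.inr i) = 0 := by
      set b : Finset (Fin n) → ZMod p :=
        fun S => if h : S ∈ 𝒩 then g (Sum.inr ⟨S, h⟩) else 0 with hb
      have hbsum : ∀ T, ∑ S ∈ 𝒩, b S * chiv (ZMod p) S T = 0 := by
        intro T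
        rw [← Finset.sum_coe_sort 𝒩 (fun S => b S * chiv (ZMod p) S T)]
        have : ∀ i : ↥𝒩, b (i : Finset (Fin n)) = g (Sum.inr i) := by
          intro i
          rw [hb]
          simp only [dif_pos i.2]
        calc (∑ i : ↥𝒩, b (i : Finset (Fin n)) * chiv (ZMod p) (i : Finset (Fin n)) T)
            = ∑ i : ↥𝒩, g (Sum.inr i) * chiv (ZMod p) (i : Finset (Fin n)) T :=
              Finset.sum_congr rfl fun i _ => by rw [this i]
          _ = 0 := by
              have hT := hgT T
              have h1 : (∑ i : ↥ℱ, g (Sum.inl i) * f (i : Finset (Fin n)) T) = 0 :=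
                Finset.sum_eq_zero fun i _ => by rw [hinl i, zero_mul]
              rw [h1, zero_add] at hT
              exact hT
      intro i
      have := chiv_indep 𝒩 b hbsum (i : Finset (Fin n)) i.2
      rw [hb] at this
      simpa [dif_pos i.2] using this
    intro i
    cases i with
    | inl i => exact hinl i
    | inr i => exact hinr i
  -- transfer to the span W and count dimensions
  have hmem : ∀ i, v i ∈ W := by
    intro i
    cases i with
    | inl i => exact hfW _
    | inr i => exact hchiW _ (h𝒩sub _ i.2).1
  set v' : (↥ℱ ⊕ ↥𝒩) → W := fun i => ⟨v i, hmem i⟩ with hv'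
  have hli' : LinearIndependent (ZMod p) v' := by
    apply LinearIndependent.of_comp W.subtype
    convert hli
    rfl
  haveI : FiniteDimensional (ZMod p) W := FiniteDimensional.span_finset (ZMod p) t
  have hcard1 : Fintype.card (↥ℱ ⊕ ↥𝒩) ≤ Module.finrank (ZMod p) W :=
    hli'.fintype_card_le_finrank
  have hcard2 : Module.finrank (ZMod p) W ≤ t.card := by
    have := finrank_span_finset_le_card (R := ZMod p) t
    simpa [Set.finrank, hW] using this
  have hcard3 : t.card ≤ 𝒮.card := Finset.card_image_le
  have hdisj1 : ∀ j ∈ bs, ∀ j' ∈ bs, j ≠ j' →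
      Disjoint (Finset.powersetCard j (Finset.univ : Finset (Fin n)))
        (Finset.powersetCard j' (Finset.univ : Finset (Fin n))) := by
    intro j _ j' _ hne
    rw [Finset.disjoint_left]
    intro S hS hS'
    rw [Finset.mem_powersetCard] at hS hS'
    exact hne (hS.2 ▸ hS'.2 ▸ rfl)
  have hdisj2 : ∀ j ∈ bs, ∀ j' ∈ bs, j ≠ j' →
      Disjoint (nonShadow n j ℱ) (nonShadow n j' ℱ) := by
    intro j hj j' hj' hne
    refine Finset.disjoint_left.mpr fun S hS hS' => ?_
    rw [nonShadow, Finset.mem_filter, Finset.mem_powersetCard] at hS hS'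
    exact hne (hS.1.2 ▸ hS'.1.2 ▸ rfl)
  have h𝒮card : 𝒮.card = ∑ j ∈ bs, n.choose j := by
    rw [h𝒮, Finset.card_biUnion hdisj1]
    refine Finset.sum_congr rfl fun j _ => ?_
    rw [Finset.card_powersetCard, Finset.card_univ, Fintype.card_fin]
  have h𝒩card : 𝒩.card = ∑ j ∈ bs, (nonShadow n j ℱ).card := by
    rw [h𝒩, Finset.card_biUnion hdisj2]
  have hcardsum : Fintype.card (↥ℱ ⊕ ↥𝒩) = ℱ.card + 𝒩.card := by
    rw [Fintype.card_sum, Fintype.card_coe, Fintype.card_coe]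
  calc ℱ.card + ∑ j ∈ bs, (nonShadow n j ℱ).card
      = Fintype.card (↥ℱ ⊕ ↥𝒩) := by rw [hcardsum, h𝒩card]
    _ ≤ Module.finrank (ZMod p) W := hcard1
    _ ≤ t.card := hcard2
    _ ≤ 𝒮.card := hcard3
    _ = ∑ j ∈ bs, n.choose j := h𝒮card
end

section
/- Let p be prime, 1 ≤ s ≤ p−1, 0 ≤ m ≤ s−1, and R ⊆ {0,…,p−1} a set of size m disjoint from {0,1,…,s−m−1}. Let L = {0,1,…,s−m−1} ∪ R ⊆ 𝔽_p. Then bsupp(L) ⊆ {s−m, s−m+1, …, s}, i.e., in the expansion P_L(t) = Σ_{j=0}^s c_j(L)·C(t,j) over 𝔽_p, all coefficients c_j(L) with j < s−m vanish. -/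
open Polynomial

/-- For an almost-initial residue pattern `L = {0,…,s−m−1} ∪ R (mod p)`, all
coefficients `c_j(L)` of the binomial expansion of `P_L` with `j < s − m` vanish,
i.e. `bsupp(L) ⊆ {s−m, …, s}`. -/
theorem stmt15 (p s m : ℕ) (hp : p.Prime) (hs1 : 1 ≤ s) (hs2 : s ≤ p - 1)
    (hm : m ≤ s - 1) (R : Finset ℕ) (hRcard : R.card = m)
    (hRp : ∀ x ∈ R, x < p) (hRdisj : Disjoint R (Finset.range (s - m)))
    (c : ℕ → ZMod p)
    (hc : ∏ ℓ ∈ (Finset.range (s - m) ∪ R).image (Nat.cast : ℕ → ZMod p),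
        (X - Polynomial.C ℓ) = ∑ j ∈ Finset.range (s + 1), c j • binomPoly p j) :
    ∀ j < s - m, c j = 0 := by
  haveI := Fact.mk hp
  have hp1 : 1 < p := hp.one_lt
  have hsp : s < p := by omega
  intro j
  induction j using Nat.strong_induction_on with
  | _ n ih =>
    intro hn
    have hns : n < s + 1 := by omega
    -- evaluate both sides at n
    have hmem : (n : ZMod p) ∈ (Finset.range (s - m) ∪ R).image (Nat.cast : ℕ → ZMod p) :=
      Finset.mem_image.mpr ⟨n, Finset.mem_union_left _ (Finset.mem_range.mpr hn), rfl⟩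
    have h0 : Polynomial.eval (n : ZMod p)
        (∏ ℓ ∈ (Finset.range (s - m) ∪ R).image (Nat.cast : ℕ → ZMod p),
          (X - Polynomial.C ℓ)) = 0 := by
      rw [Polynomial.eval_prod]
      exact Finset.prod_eq_zero hmem (by simp)
    have h1 := congrArg (Polynomial.eval (n : ZMod p)) hc
    rw [h0, Polynomial.eval_finset_sum] at h1
    have h2 : ∀ i ∈ Finset.range (s + 1),
        Polynomial.eval (n : ZMod p) (c i • binomPoly p i)
          = c i * (((i.factorial : ZMod p))⁻¹ * (n.descFactorial i : ZMod p)) := by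
      intro i _
      simp [binomPoly, descPochhammer_eval_eq_descFactorial, mul_assoc]
    rw [Finset.sum_congr rfl h2] at h1
    have h3 : ∑ i ∈ Finset.range (s + 1),
        c i * (((i.factorial : ZMod p))⁻¹ * (n.descFactorial i : ZMod p))
        = c n * (((n.factorial : ZMod p))⁻¹ * (n.descFactorial n : ZMod p)) := by
      refine Finset.sum_eq_single n ?_ (fun h => absurd (Finset.mem_range.mpr hns) h)
      intro b _ hb
      rcases lt_or_gt_of_ne hb with h | h
      · rw [ih b h (by omega), zero_mul]
      · rw [Nat.descFactorial_eq_zero_iff_lt.mpr h]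
        simp
    rw [h3] at h1
    have hfac : (n.factorial : ZMod p) ≠ 0 := by
      rw [Ne, ZMod.natCast_eq_zero_iff]
      intro h
      exact absurd ((Nat.Prime.dvd_factorial hp).mp h) (by omega)
    rw [Nat.descFactorial_self, inv_mul_cancel₀ hfac, mul_one] at h1
    exact h1.symm
end

section
/- Let p be prime, 1 ≤ s ≤ p−1, 0 ≤ m ≤ s−1, R ⊆ {0,…,p−1} of size m disjoint from {0,…,s−m−1}, L = {0,…,s−m−1} ∪ R ⊆ 𝔽_p, and K ⊆ 𝔽_p ∖ L. If ℱ ⊆ 2^[n] satisfies |F| mod p ∈ K for every F ∈ ℱ and |E ∩ F| mod p ∈ L for all distinct E, F ∈ ℱ, then |ℱ| ≤ Σ_{i=0}^m C(n, s−i). -/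
open Finset

section Aux

variable {𝔽 : Type*} [Field 𝔽] [DecidableEq 𝔽] {n : ℕ}

private def psiF (I : Finset (Fin n)) : Finset (Fin n) → 𝔽 := fun G => if I ⊆ G then 1 else 0

private def binF (F : Finset (Fin n)) (j : ℕ) : Finset (Fin n) → 𝔽 :=
  fun G => ((G ∩ F).card.choose j : 𝔽)

private lemma binF_eq_sum (F : Finset (Fin n)) (j : ℕ) :
    binF (𝔽 := 𝔽) F j = ∑ I ∈ F.powersetCard j, psiF I := by
  funext G
  rw [Finset.sum_apply]
  simp only [psiF, binF, Finset.sum_boole]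
  congr 1
  have : (F.powersetCard j).filter (fun I => I ⊆ G) = (G ∩ F).powersetCard j := by
    ext I
    simp only [mem_filter, mem_powersetCard, subset_inter_iff]
    tauto
  rw [this, card_powersetCard]

private lemma binF_mem_span (F : Finset (Fin n)) {j d : ℕ} (hj : j ≤ d) :
    binF (𝔽 := 𝔽) F j ∈
      Submodule.span 𝔽 (psiF (𝔽 := 𝔽) '' {I : Finset (Fin n) | I.card ≤ d}) := by
  rw [binF_eq_sum]
  refine Submodule.sum_mem _ fun I hI => Submodule.subset_span ⟨I, ?_, rfl⟩
  have := (Finset.mem_powersetCard.mp hI).2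
  simp only [Set.mem_setOf_eq, this]
  exact hj

private lemma mul_binF (F : Finset (Fin n)) (j : ℕ) (a : 𝔽) :
    (fun G => ((((G ∩ F).card : ℕ) : 𝔽) - a) * binF F j G)
      = (j + 1 : 𝔽) • binF (𝔽 := 𝔽) F (j + 1) + (((j : ℕ) : 𝔽) - a) • binF F j := by
  funext G
  simp only [binF, Pi.add_apply, Pi.smul_apply, smul_eq_mul]
  set t := (G ∩ F).card with ht
  have hnat : t * t.choose j = (j + 1) * t.choose (j + 1) + j * t.choose j := by
    rcases le_or_gt j t with h | h
    · have h1 : t.choose (j + 1) * (j + 1) = t.choose j * (t - j) :=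
        Nat.choose_succ_right_eq t j
      have h2 : t = (t - j) + j := by omega
      calc t * t.choose j = (t - j) * t.choose j + j * t.choose j := by
            rw [← Nat.add_mul]; rw [← h2]
        _ = (j + 1) * t.choose (j + 1) + j * t.choose j := by
            rw [mul_comm (j+1), h1, mul_comm]
    · rw [Nat.choose_eq_zero_of_lt h, Nat.choose_eq_zero_of_lt (h.trans (Nat.lt_succ_self _))]
      ring
  have hcast : (t : 𝔽) * (t.choose j : 𝔽)
      = ((j : ℕ) + 1 : 𝔽) * (t.choose (j + 1) : 𝔽) + (j : 𝔽) * (t.choose j : 𝔽) := by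
    have := congrArg (Nat.cast : ℕ → 𝔽) hnat
    push_cast at this
    convert this using 2 <;> push_cast <;> ring
  have : ((t : 𝔽) - a) * (t.choose j : 𝔽)
      = (t : 𝔽) * (t.choose j : 𝔽) - a * (t.choose j : 𝔽) := by ring
  rw [this, hcast]
  push_cast
  ring

private lemma prod_mem_span_binF (F : Finset (Fin n)) (D : Finset 𝔽) :
    (fun G => ∏ l ∈ D, ((((G ∩ F).card : ℕ) : 𝔽) - l)) ∈
      Submodule.span 𝔽 (binF (𝔽 := 𝔽) F '' {j : ℕ | j ≤ D.card}) := by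
  induction D using Finset.induction_on with
  | empty =>
    have h1 : (fun _ : Finset (Fin n) => (1 : 𝔽)) = binF (𝔽 := 𝔽) F 0 := by
      funext G; simp [binF]
    simp only [Finset.prod_empty]
    rw [h1]
    exact Submodule.subset_span ⟨0, by simp, rfl⟩
  | @insert a D ha ih =>
    have hM : ∀ x : Finset (Fin n) → 𝔽,
        (LinearMap.mulLeft 𝔽 (fun G => (((G ∩ F).card : ℕ) : 𝔽) - a)) x
          = fun G => ((((G ∩ F).card : ℕ) : 𝔽) - a) * x G := fun x => rfl
    have key : Submodule.map (LinearMap.mulLeft 𝔽 (fun G => (((G ∩ F).card : ℕ) : 𝔽) - a))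
        (Submodule.span 𝔽 (binF (𝔽 := 𝔽) F '' {j : ℕ | j ≤ D.card}))
        ≤ Submodule.span 𝔽 (binF (𝔽 := 𝔽) F '' {j : ℕ | j ≤ D.card + 1}) := by
      rw [Submodule.map_span]
      apply Submodule.span_le.mpr
      rintro _ ⟨_, ⟨j, hj, rfl⟩, rfl⟩
      rw [hM, mul_binF]
      exact Submodule.add_mem _
        (Submodule.smul_mem _ _ (Submodule.subset_span ⟨j + 1, by simpa using Nat.succ_le_succ hj, rfl⟩))
        (Submodule.smul_mem _ _ (Submodule.subset_span ⟨j, by simpa using hj.trans (Nat.le_succ _), rfl⟩))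
    have hmem := key ⟨_, ih, rfl⟩
    rw [hM] at hmem
    have heq : (fun G => ∏ l ∈ insert a D, ((((G ∩ F).card : ℕ) : 𝔽) - l))
        = fun G => ((((G ∩ F).card : ℕ) : 𝔽) - a) * ∏ l ∈ D, ((((G ∩ F).card : ℕ) : 𝔽) - l) := by
      funext G
      rw [Finset.prod_insert ha]
    rw [Finset.card_insert_of_notMem ha, heq]
    exact hmem

private lemma card_filter_card_le (n d : ℕ) :
    ((Finset.univ : Finset (Finset (Fin n))).filter fun I => I.card ≤ d).card
      = ∑ i ∈ Finset.range (d + 1), n.choose i := by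
  rw [Finset.card_eq_sum_card_fiberwise (f := Finset.card) (t := Finset.range (d + 1))
    (fun I hI => by simp only [Finset.mem_coe, mem_filter] at hI; simp [Nat.lt_succ_iff, hI.2])]
  refine Finset.sum_congr rfl fun i hi => ?_
  simp only [Finset.mem_range, Nat.lt_succ_iff] at hi
  have h1 : ((Finset.univ : Finset (Finset (Fin n))).filter fun I => I.card ≤ d).filter
      (fun I => I.card = i) = (Finset.univ : Finset (Finset (Fin n))).filter fun I => I.card = i := by
    ext I
    simp only [mem_filter, mem_univ, true_and]
    constructor
    · tauto
    · intro h; exact ⟨by omega, h⟩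
  rw [h1]
  rw [show ((Finset.univ : Finset (Finset (Fin n))).filter fun I => I.card = i)
      = Finset.univ.powersetCard i from Finset.univ_filter_card_eq (Fin n) i]
  rw [Finset.card_powersetCard, Finset.card_univ, Fintype.card_fin]

end Aux

/-- Almost-initial residue pattern collapse: for `L = {0,…,s−m−1} ∪ R (mod p)`,
any admissible modular family satisfies `|ℱ| ≤ Σ_{i=0}^m C(n, s−i)`. -/
theorem stmt16 (p n s m : ℕ) (hp : p.Prime) (hs1 : 1 ≤ s) (hs2 : s ≤ p - 1)
    (hm : m ≤ s - 1) (R : Finset ℕ) (hRcard : R.card = m)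
    (hRp : ∀ x ∈ R, x < p) (hRdisj : Disjoint R (Finset.range (s - m)))
    (K : Finset (ZMod p))
    (hK : Disjoint K ((Finset.range (s - m) ∪ R).image (Nat.cast : ℕ → ZMod p)))
    (ℱ : Finset (Finset (Fin n)))
    (hℱK : ∀ F ∈ ℱ, (F.card : ZMod p) ∈ K)
    (hint : ∀ E ∈ ℱ, ∀ F ∈ ℱ, E ≠ F →
      ((E ∩ F).card : ZMod p) ∈
        (Finset.range (s - m) ∪ R).image (Nat.cast : ℕ → ZMod p)) :
    ℱ.card ≤ ∑ i ∈ Finset.range (m + 1), n.choose (s - i) := by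
  haveI := Fact.mk hp
  have hp1 : 1 < p := hp.one_lt
  have hms : m < s := by omega
  set Limg : Finset (ZMod p) := (Finset.range (s - m) ∪ R).image (Nat.cast : ℕ → ZMod p)
    with hLimg
  set φ : Finset (Fin n) → (Finset (Fin n) → ZMod p) :=
    fun F G => ∏ l ∈ Limg, ((((G ∩ F).card : ℕ) : ZMod p) - l) with hφ
  set S : Submodule (ZMod p) (Finset (Fin n) → ZMod p) :=
    Submodule.span (ZMod p) (psiF (𝔽 := ZMod p) '' {I : Finset (Fin n) | I.card ≤ s}) with hS
  have hLcard : Limg.card ≤ s := by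
    calc Limg.card ≤ (Finset.range (s - m) ∪ R).card := Finset.card_image_le
      _ ≤ (Finset.range (s - m)).card + R.card := Finset.card_union_le _ _
      _ = (s - m) + m := by rw [Finset.card_range, hRcard]
      _ = s := by omega
  -- membership of φ F in S
  have hφmem : ∀ F : Finset (Fin n), φ F ∈ S := by
    intro F
    have h := prod_mem_span_binF (𝔽 := ZMod p) F Limg
    have hle : Submodule.span (ZMod p) (binF (𝔽 := ZMod p) F '' {j : ℕ | j ≤ Limg.card}) ≤ S := by
      apply Submodule.span_le.mpr
      rintro _ ⟨j, hj, rfl⟩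
      exact binF_mem_span F ((Set.mem_setOf_eq ▸ hj).trans hLcard)
    exact hle h
  have hψmem : ∀ I : Finset (Fin n), I.card ≤ s → psiF (𝔽 := ZMod p) I ∈ S := by
    intro I hI
    exact Submodule.subset_span ⟨I, hI, rfl⟩
  set 𝒯 : Finset (Finset (Fin n)) :=
    Finset.univ.filter (fun I => I.card ≤ s - m - 1) with h𝒯
  have h𝒯mem : ∀ {I : Finset (Fin n)}, I ∈ 𝒯 ↔ I.card ≤ s - m - 1 := by
    intro I; simp [h𝒯]
  -- the linearly independent family
  set vv : ({x // x ∈ ℱ} ⊕ {x // x ∈ 𝒯}) → S :=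
    Sum.elim (fun F => ⟨φ F.val, hφmem F.val⟩)
      (fun I => ⟨psiF I.val, hψmem I.val ((h𝒯mem.mp I.property).trans (by omega))⟩) with hvv
  -- key evaluation facts
  have hφzero : ∀ (F G : Finset (Fin n)), (((G ∩ F).card : ℕ) : ZMod p) ∈ Limg → φ F G = 0 := by
    intro F G hmem
    exact Finset.prod_eq_zero hmem (sub_self _)
  have hφsmall : ∀ (F G : Finset (Fin n)), G.card ≤ s - m - 1 → φ F G = 0 := by
    intro F G hG
    apply hφzero
    apply Finset.mem_image_of_mem
    apply Finset.mem_union_left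
    rw [Finset.mem_range]
    have := Finset.card_le_card (Finset.inter_subset_left (s₂ := F) (s₁ := G))
    omega
  have hli : LinearIndependent (ZMod p) vv := by
    rw [Fintype.linearIndependent_iff]
    intro g hg
    have hg' : ∑ i : {x // x ∈ ℱ} ⊕ {x // x ∈ 𝒯}, g i • ((vv i : Finset (Fin n) → ZMod p)) = 0 := by
      have := congrArg (Subtype.val) hg
      push_cast at this
      simpa using this
    have heval : ∀ G : Finset (Fin n),
        (∑ F : {x // x ∈ ℱ}, g (Sum.inl F) * φ F.val G)
          + (∑ I : {x // x ∈ 𝒯}, g (Sum.inr I) * psiF (𝔽 := ZMod p) I.val G) = 0 := by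
      intro G
      have := congrFun hg' G
      simpa [hvv, Fintype.sum_sum_type, Finset.sum_apply] using this
    -- step 1: all ψ-coefficients vanish
    have hbeta : ∀ k (I : Finset (Fin n)) (hI : I ∈ 𝒯), I.card = k → g (Sum.inr ⟨I, hI⟩) = 0 := by
      intro k
      induction k using Nat.strong_induction_on with
      | _ k IH =>
        intro I hI hIk
        have h1 := heval I
        have hz1 : ∀ F : {x // x ∈ ℱ}, g (Sum.inl F) * φ F.val I = 0 := by
          intro F
          rw [hφsmall F.val I (h𝒯mem.mp hI), mul_zero]
        rw [Finset.sum_congr rfl (fun F _ => hz1 F), Finset.sum_const_zero, zero_add] at h1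
        have h2 : (∑ I' : {x // x ∈ 𝒯}, g (Sum.inr I') * psiF (𝔽 := ZMod p) I'.val I)
            = g (Sum.inr ⟨I, hI⟩) := by
          rw [Finset.sum_eq_single_of_mem (⟨I, hI⟩ : {x // x ∈ 𝒯}) (Finset.mem_univ _)
            ?_]
          · simp [psiF]
          · intro b _ hb
            by_cases hsub : b.val ⊆ I
            · have hne : b.val ≠ I := fun h => hb (Subtype.ext h)
              have hlt : b.val.card < k := by
                have := Finset.card_lt_card (Finset.ssubset_iff_subset_ne.mpr ⟨hsub, hne⟩)
                omega
              have := IH b.val.card hlt b.val b.property rfl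
              rw [show (⟨b.val, b.property⟩ : {x // x ∈ 𝒯}) = b from Subtype.ext rfl] at this
              rw [this, zero_mul]
            · simp [psiF, hsub]
        rw [h2] at h1
        exact h1
    have hbeta' : ∀ x : {x // x ∈ 𝒯}, g (Sum.inr x) = 0 := by
      rintro ⟨I, hI⟩
      exact hbeta I.card I hI rfl
    -- step 2: all φ-coefficients vanish
    have halpha : ∀ x : {x // x ∈ ℱ}, g (Sum.inl x) = 0 := by
      rintro ⟨F, hF⟩
      have h1 := heval F
      have hz2 : (∑ I : {x // x ∈ 𝒯}, g (Sum.inr I) * psiF (𝔽 := ZMod p) I.val F) = 0 := by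
        apply Finset.sum_eq_zero
        intro I _
        rw [hbeta' I, zero_mul]
      rw [hz2, add_zero] at h1
      have h2 : (∑ E : {x // x ∈ ℱ}, g (Sum.inl E) * φ E.val F)
          = g (Sum.inl ⟨F, hF⟩) * φ F F := by
        rw [Finset.sum_eq_single_of_mem (⟨F, hF⟩ : {x // x ∈ ℱ}) (Finset.mem_univ _)
          ?_]
        · intro b _ hb
          have hne : b.val ≠ F := fun h => hb (Subtype.ext h)
          have hmem : (((F ∩ b.val).card : ℕ) : ZMod p) ∈ Limg := by
            rw [Finset.inter_comm]
            exact hint b.val b.property F hF hne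
          rw [hφzero b.val F hmem, mul_zero]
      rw [h2] at h1
      have h3 : φ F F ≠ 0 := by
        rw [hφ]
        simp only [Finset.inter_self]
        rw [Finset.prod_ne_zero_iff]
        intro l hl
        have hFK := hℱK F hF
        have : (F.card : ZMod p) ∉ Limg := Finset.disjoint_left.mp hK hFK
        intro hEq
        rw [sub_eq_zero] at hEq
        exact this (hEq ▸ hl)
      exact (mul_eq_zero.mp h1).resolve_right h3
    rintro (F | I)
    · exact halpha F
    · exact hbeta' I
  -- dimension count
  have hcard : Fintype.card ({x // x ∈ ℱ} ⊕ {x // x ∈ 𝒯}) ≤ Module.finrank (ZMod p) S :=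
    hli.fintype_card_le_finrank
  have hScard : Module.finrank (ZMod p) S
      ≤ (Finset.univ.filter fun I : Finset (Fin n) => I.card ≤ s).card := by
    have hset : (psiF (𝔽 := ZMod p) '' {I : Finset (Fin n) | I.card ≤ s})
        = ((Finset.univ.filter fun I : Finset (Fin n) => I.card ≤ s).image
            (psiF (𝔽 := ZMod p)) : Finset (Finset (Fin n) → ZMod p)) := by
      ext x
      simp [Set.mem_image]
    rw [hS, hset]
    calc Module.finrank (ZMod p) (Submodule.span (ZMod p)
          (((Finset.univ.filter fun I : Finset (Fin n) => I.card ≤ s).image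
            (psiF (𝔽 := ZMod p)) : Finset (Finset (Fin n) → ZMod p)) : Set (Finset (Fin n) → ZMod p)))
        ≤ ((Finset.univ.filter fun I : Finset (Fin n) => I.card ≤ s).image
            (psiF (𝔽 := ZMod p))).card := finrank_span_finset_le_card _
      _ ≤ _ := Finset.card_image_le
  have hsum : ℱ.card + 𝒯.card ≤ ∑ i ∈ Finset.range (s + 1), n.choose i := by
    have := hcard.trans hScard
    rwa [Fintype.card_sum, Fintype.card_coe, Fintype.card_coe,
      card_filter_card_le n s] at this
  have h𝒯card : 𝒯.card = ∑ i ∈ Finset.range (s - m), n.choose i := by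
    rw [h𝒯, card_filter_card_le n (s - m - 1)]
    congr 1
    congr 1
    omega
  have hsplit : ∑ i ∈ Finset.range (s + 1), n.choose i
      = (∑ i ∈ Finset.range (s - m), n.choose i)
        + ∑ i ∈ Finset.Ico (s - m) (s + 1), n.choose i := by
    rw [Finset.range_eq_Ico, ← Finset.sum_Ico_consecutive _ (Nat.zero_le (s - m)) (by omega), Finset.range_eq_Ico]
  have hIco : ∑ i ∈ Finset.Ico (s - m) (s + 1), n.choose i
      = ∑ i ∈ Finset.range (m + 1), n.choose (s - i) := by
    rw [Finset.sum_Ico_eq_sum_range]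
    have hlen : s + 1 - (s - m) = m + 1 := by omega
    rw [hlen]
    rw [← Finset.sum_range_reflect (fun i => n.choose (s - i)) (m + 1)]
    refine Finset.sum_congr rfl fun i hi => ?_
    rw [Finset.mem_range] at hi
    congr 1
    omega
  rw [h𝒯card] at hsum
  omega
end

section
/- Let p be prime and 2 ≤ s ≤ p−1. If L = {0,1,…,s−1} ⊆ 𝔽_p and K ⊆ 𝔽_p ∖ L, then every ℱ ⊆ 2^[n] with |F| mod p ∈ K for every F ∈ ℱ and |E ∩ F| mod p ∈ L for all distinct E, F ∈ ℱ satisfies |ℱ| ≤ C(n,s). Moreover, if s ∈ K and n ≥ s, the family of all s-subsets of [n] attains this bound. -/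
open Finset

private lemma stmt17_lucas {p : ℕ} [Fact p.Prime] {s : ℕ} (hs : s < p) (m : ℕ) :
    ((m.choose s : ℕ) : ZMod p) = (((m % p).choose s : ℕ) : ZMod p) := by
  have h := Choose.choose_modEq_choose_mod_mul_choose_div_nat (p := p) (n := m) (k := s)
  rw [ZMod.natCast_eq_natCast_iff]
  simpa [Nat.mod_eq_of_lt hs, Nat.div_eq_of_lt hs] using h

private lemma stmt17_inner {p n s : ℕ} (E F : Finset (Fin n)) :
    ∑ S ∈ Finset.powersetCard s (Finset.univ : Finset (Fin n)),
      (if S ⊆ E then (1 : ZMod p) else 0) * (if S ⊆ F then 1 else 0)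
      = (((E ∩ F).card.choose s : ℕ) : ZMod p) := by
  have h1 : ∀ S : Finset (Fin n),
      (if S ⊆ E then (1 : ZMod p) else 0) * (if S ⊆ F then 1 else 0)
        = if S ⊆ E ∩ F then 1 else 0 := by
    intro S
    by_cases hE : S ⊆ E <;> by_cases hF : S ⊆ F <;>
      simp [hE, hF, Finset.subset_inter_iff]
  simp only [h1]
  rw [Finset.sum_boole]
  have h2 : (Finset.powersetCard s (Finset.univ : Finset (Fin n))).filter (· ⊆ E ∩ F)
      = Finset.powersetCard s (E ∩ F) := by
    ext S
    simp [Finset.mem_powersetCard, and_comm]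
  rw [h2, Finset.card_powersetCard]

/-- Consecutive-residue collapse: for `L = {0,…,s−1} (mod p)` every admissible
modular family has size at most `C(n,s)`, and if `s ∈ K` and `n ≥ s` the family of
all `s`-subsets of `[n]` is admissible and attains this bound. -/
theorem stmt17 (p n s : ℕ) (hp : p.Prime) (hs1 : 2 ≤ s) (hs2 : s ≤ p - 1)
    (K : Finset (ZMod p))
    (hK : Disjoint K ((Finset.range s).image (Nat.cast : ℕ → ZMod p))) :
    (∀ ℱ : Finset (Finset (Fin n)),
        (∀ F ∈ ℱ, (F.card : ZMod p) ∈ K) →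
        (∀ E ∈ ℱ, ∀ F ∈ ℱ, E ≠ F →
          ((E ∩ F).card : ZMod p) ∈ (Finset.range s).image (Nat.cast : ℕ → ZMod p)) →
        ℱ.card ≤ n.choose s) ∧
    ((s : ZMod p) ∈ K → s ≤ n →
      (∀ F ∈ Finset.powersetCard s (Finset.univ : Finset (Fin n)),
        (F.card : ZMod p) ∈ K) ∧
      (∀ E ∈ Finset.powersetCard s (Finset.univ : Finset (Fin n)),
        ∀ F ∈ Finset.powersetCard s (Finset.univ : Finset (Fin n)), E ≠ F →
          ((E ∩ F).card : ZMod p) ∈ (Finset.range s).image (Nat.cast : ℕ → ZMod p)) ∧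
      (Finset.powersetCard s (Finset.univ : Finset (Fin n))).card = n.choose s) := by
  haveI : Fact p.Prime := ⟨hp⟩
  have hp2 : 2 ≤ p := hp.two_le
  have hsp : s < p := by omega
  constructor
  · -- main bound
    intro ℱ hcard hinter
    -- off-diagonal vanishing
    have hoff : ∀ E ∈ ℱ, ∀ F ∈ ℱ, E ≠ F →
        (((E ∩ F).card.choose s : ℕ) : ZMod p) = 0 := by
      intro E hE F hF hEF
      obtain ⟨l, hl, hcast⟩ := Finset.mem_image.mp (hinter E hE F hF hEF)
      rw [Finset.mem_range] at hl
      have hmod : (E ∩ F).card % p = l := by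
        have h' := (ZMod.natCast_eq_natCast_iff' _ _ _).mp hcast
        rw [Nat.mod_eq_of_lt (show l < p by omega)] at h'
        exact h'.symm
      rw [stmt17_lucas hsp, hmod, Nat.choose_eq_zero_of_lt hl, Nat.cast_zero]
    -- diagonal nonvanishing
    have hdiag : ∀ F ∈ ℱ, ((F.card.choose s : ℕ) : ZMod p) ≠ 0 := by
      intro F hF
      set k := F.card % p with hk
      have hkp : k < p := Nat.mod_lt _ (by omega)
      have hks : s ≤ k := by
        by_contra hlt
        push_neg at hlt
        have : (F.card : ZMod p) ∈ (Finset.range s).image (Nat.cast : ℕ → ZMod p) := by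
          refine Finset.mem_image.mpr ⟨k, Finset.mem_range.mpr hlt, ?_⟩
          rw [ZMod.natCast_eq_natCast_iff', Nat.mod_eq_of_lt hkp]
        exact (Finset.disjoint_left.mp hK (hcard F hF)) this
      rw [stmt17_lucas hsp, ← hk]
      intro h0
      have hdvd : p ∣ k.choose s := (ZMod.natCast_eq_zero_iff _ _).mp h0
      have : p ∣ k.factorial := by
        have := Nat.choose_mul_factorial_mul_factorial hks
        exact this ▸ Dvd.dvd.mul_right (Dvd.dvd.mul_right hdvd _) _
      exact absurd (hp.dvd_factorial.mp this) (by omega)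
    -- linear independence of inclusion vectors
    set T := Finset.powersetCard s (Finset.univ : Finset (Fin n)) with hT
    have hli : LinearIndependent (ZMod p)
        (fun E : ℱ => fun S : T => if (S : Finset (Fin n)) ⊆ (E : Finset (Fin n))
          then (1 : ZMod p) else 0) := by
      rw [Fintype.linearIndependent_iff]
      intro g hg F
      have h0 := congrArg (fun v : T → ZMod p =>
        ∑ S : T, v S * (if (S : Finset (Fin n)) ⊆ (F : Finset (Fin n))
          then (1 : ZMod p) else 0)) hg
      simp only [Finset.sum_apply, Pi.smul_apply, smul_eq_mul, Pi.zero_apply, zero_mul,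
        Finset.sum_const_zero, Finset.sum_mul] at h0
      rw [Finset.sum_comm] at h0
      have h1 : ∀ E : ℱ, ∑ S : T,
          g E * ((if (S : Finset (Fin n)) ⊆ (E : Finset (Fin n)) then (1 : ZMod p) else 0)
            * (if (S : Finset (Fin n)) ⊆ (F : Finset (Fin n)) then (1 : ZMod p) else 0))
          = g E * ((((E : Finset (Fin n)) ∩ (F : Finset (Fin n))).card.choose s : ℕ) : ZMod p) := by
        intro E
        rw [← Finset.mul_sum]
        congr 1
        rw [← stmt17_inner]
        exact Finset.sum_coe_sort T (fun S =>
          (if S ⊆ (E : Finset (Fin n)) then (1 : ZMod p) else 0) *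
            (if S ⊆ (F : Finset (Fin n)) then (1 : ZMod p) else 0))
      simp only [mul_assoc] at h0
      rw [Finset.sum_congr rfl (fun E _ => h1 E)] at h0
      rw [Finset.sum_eq_single F (fun E _ hEF => by
            rw [hoff E E.2 F F.2 (fun h => hEF (Subtype.ext h)), mul_zero])
          (fun h => absurd (Finset.mem_univ F) h)] at h0
      rw [Finset.inter_self] at h0
      exact (mul_eq_zero.mp h0).resolve_right (hdiag F F.2)
    have hcardle := hli.fintype_card_le_finrank
    rw [Module.finrank_pi, Fintype.card_coe, Fintype.card_coe, hT,
      Finset.card_powersetCard, Finset.card_univ, Fintype.card_fin] at hcardle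
    exact hcardle
  · -- sharpness
    intro hsK hsn
    refine ⟨?_, ?_, ?_⟩
    · intro F hF
      rw [(Finset.mem_powersetCard.mp hF).2]
      exact hsK
    · intro E hE F hF hEF
      have hEcard := (Finset.mem_powersetCard.mp hE).2
      have hFcard := (Finset.mem_powersetCard.mp hF).2
      have hsub : E ∩ F ⊆ E := Finset.inter_subset_left
      have hlt : (E ∩ F).card < s := by
        rcases lt_or_eq_of_le (Finset.card_le_card hsub) with h | h
        · omega
        · exfalso
          have hEF' : E ∩ F = E :=
            Finset.eq_of_subset_of_card_le hsub (by omega)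
          have : E ⊆ F := hEF' ▸ Finset.inter_subset_right
          exact hEF (Finset.eq_of_subset_of_card_le this (by omega))
      exact Finset.mem_image.mpr ⟨(E ∩ F).card, Finset.mem_range.mpr hlt, rfl⟩
    · rw [Finset.card_powersetCard, Finset.card_univ, Fintype.card_fin]
end

section
/- Let K and L be disjoint finite sets of nonnegative integers with |L| = s, and expand P_L(t) = ∏_{ℓ∈L}(t−ℓ) = Σ_{j=0}^s c_j(L)·C(t,j) in ℝ[t], with bsupp(L) = {j : c_j(L) ≠ 0}. If ℱ ⊆ ⋃_{k∈K} C([n],k) is L-intersecting, then |ℱ| + Σ_{j∈bsupp(L)} |𝒩_j(ℱ)| ≤ Σ_{j∈bsupp(L)} C(n,j). -/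
open Polynomial

/-- The binomial polynomial `C(t,j)` over `ℝ`. -/
noncomputable def binomPolyR (j : ℕ) : Polynomial ℝ :=
  Polynomial.C ((j.factorial : ℝ))⁻¹ * descPochhammer ℝ j

lemma binomPolyR_eval_nat (j m : ℕ) : (binomPolyR j).eval (m : ℝ) = (m.choose j : ℝ) := by
  have hj : (j.factorial : ℝ) ≠ 0 := Nat.cast_ne_zero.2 j.factorial_ne_zero
  rw [binomPolyR, eval_mul, eval_C, descPochhammer_eval_eq_descFactorial,
    Nat.descFactorial_eq_factorial_mul_choose]
  push_cast
  field_simp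

/-- Nonmodular support-sensitive analogue: for disjoint `K, L ⊆ ℤ_{≥0}` and an
`L`-intersecting family with sizes in `K`,
`|ℱ| + Σ_{j∈bsupp(L)} |𝒩_j(ℱ)| ≤ Σ_{j∈bsupp(L)} C(n,j)`. -/
theorem stmt19 (n s : ℕ) (K L : Finset ℕ) (hdisj : Disjoint K L) (hLcard : L.card = s)
    (c : ℕ → ℝ)
    (hc : ∏ ℓ ∈ L, (X - Polynomial.C (ℓ : ℝ)) =
      ∑ j ∈ Finset.range (s + 1), c j • binomPolyR j)
    (ℱ : Finset (Finset (Fin n)))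
    (hℱK : ∀ F ∈ ℱ, F.card ∈ K)
    (hint : ∀ A ∈ ℱ, ∀ B ∈ ℱ, A ≠ B → (A ∩ B).card ∈ L) :
    ℱ.card + ∑ j ∈ (Finset.range (s + 1)).filter (fun j => c j ≠ 0),
        (nonShadow n j ℱ).card
      ≤ ∑ j ∈ (Finset.range (s + 1)).filter (fun j => c j ≠ 0), n.choose j := by
  classical
  set P : Polynomial ℝ := ∏ ℓ ∈ L, (X - Polynomial.C (ℓ : ℝ)) with hP
  set supp : Finset ℕ := (Finset.range (s + 1)).filter (fun j => c j ≠ 0) with hsupp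
  set e : Finset (Fin n) → (Finset (Fin n) → ℝ) :=
    fun T x => if T ⊆ x then (1 : ℝ) else 0 with he
  set f : Finset (Fin n) → (Finset (Fin n) → ℝ) :=
    fun A x => P.eval (((A ∩ x).card : ℝ)) with hf
  set v : Finset (Fin n) → (Finset (Fin n) → ℝ) :=
    fun A => if A ∈ ℱ then f A else e A with hv
  set N : Finset (Finset (Fin n)) := supp.biUnion (fun j => nonShadow n j ℱ) with hN
  set I : Finset (Finset (Fin n)) := ℱ ∪ N with hI
  set J : Finset (Finset (Fin n)) :=
    supp.biUnion (fun j => Finset.powersetCard j Finset.univ) with hJ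
  -- evaluation facts about P
  have hPzero : ∀ m : ℕ, m ∈ L → P.eval (m : ℝ) = 0 := by
    intro m hm
    rw [hP, eval_prod]
    exact Finset.prod_eq_zero hm (by simp)
  have hPne : ∀ m : ℕ, m ∈ K → P.eval (m : ℝ) ≠ 0 := by
    intro m hm
    rw [hP, eval_prod]
    rw [Finset.prod_ne_zero_iff]
    intro ℓ hℓ
    have hne : m ≠ ℓ := fun h => (Finset.disjoint_left.1 hdisj) hm (h ▸ hℓ)
    simp only [eval_sub, eval_X, eval_C]
    exact sub_ne_zero.2 (by exact_mod_cast hne)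
  -- the binomial counting identity
  have hchoose : ∀ (A x : Finset (Fin n)) (j : ℕ),
      (((A ∩ x).card.choose j : ℕ) : ℝ) = ∑ T ∈ Finset.powersetCard j A, e T x := by
    intro A x j
    have : ∑ T ∈ Finset.powersetCard j A, e T x
        = (((Finset.powersetCard j A).filter (fun T => T ⊆ x)).card : ℝ) := by
      simp only [he]
      rw [Finset.sum_boole]
    rw [this]
    have hfe : (Finset.powersetCard j A).filter (fun T => T ⊆ x)
        = Finset.powersetCard j (A ∩ x) := by
      ext T
      simp only [Finset.mem_filter, Finset.mem_powersetCard, Finset.subset_inter_iff]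
      tauto
    rw [hfe, Finset.card_powersetCard]
  -- expansion of f
  have hfA : ∀ A : Finset (Fin n),
      f A = ∑ j ∈ supp, c j • (∑ T ∈ Finset.powersetCard j A, e T) := by
    intro A
    funext x
    have h1 : f A x = ∑ j ∈ Finset.range (s + 1),
        c j * (((A ∩ x).card.choose j : ℕ) : ℝ) := by
      rw [hf]
      simp only []
      rw [hc, eval_finset_sum]
      refine Finset.sum_congr rfl (fun j _ => ?_)
      rw [eval_smul, binomPolyR_eval_nat, smul_eq_mul]
    have h2 : ∑ j ∈ supp, c j * (((A ∩ x).card.choose j : ℕ) : ℝ)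
        = ∑ j ∈ Finset.range (s + 1), c j * (((A ∩ x).card.choose j : ℕ) : ℝ) := by
      rw [hsupp]
      apply Finset.sum_filter_of_ne
      intro j _ hj hcj
      exact hj (by rw [hcj, zero_mul])
    rw [h1, ← h2]
    rw [Finset.sum_apply]
    refine Finset.sum_congr rfl (fun j _ => ?_)
    rw [Pi.smul_apply, smul_eq_mul, Finset.sum_apply, hchoose]
  -- the span
  set W : Submodule ℝ (Finset (Fin n) → ℝ) :=
    Submodule.span ℝ ((J.image e : Finset (Finset (Fin n) → ℝ)) : Set (Finset (Fin n) → ℝ))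
    with hW
  have hvW : ∀ A ∈ I, v A ∈ W := by
    intro A hA
    by_cases hAF : A ∈ ℱ
    · rw [hv]
      simp only [if_pos hAF]
      rw [hfA]
      refine Submodule.sum_mem _ (fun j hj => ?_)
      refine Submodule.smul_mem _ _ (Submodule.sum_mem _ (fun T hT => ?_))
      apply Submodule.subset_span
      rw [Finset.coe_image]
      refine Set.mem_image_of_mem _ ?_
      rw [hJ, Finset.coe_biUnion]
      refine Set.mem_biUnion (Finset.mem_coe.2 hj) ?_
      rw [Finset.mem_powersetCard] at hT
      rw [Finset.mem_coe, Finset.mem_powersetCard]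
      exact ⟨Finset.subset_univ T, hT.2⟩
    · have hAN : A ∈ N := by
        rw [hI, Finset.mem_union] at hA
        exact hA.resolve_left hAF
      rw [hv]
      simp only [if_neg hAF]
      apply Submodule.subset_span
      rw [Finset.coe_image]
      refine Set.mem_image_of_mem _ ?_
      rw [hN, Finset.mem_biUnion] at hAN
      obtain ⟨j, hj, hAj⟩ := hAN
      rw [nonShadow, Finset.mem_filter] at hAj
      rw [Finset.mem_coe, hJ, Finset.mem_biUnion]
      exact ⟨j, hj, hAj.1⟩
  -- membership facts
  have hNprop : ∀ T ∈ N, ∀ F ∈ ℱ, ¬ T ⊆ F := by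
    intro T hT F hF
    rw [hN, Finset.mem_biUnion] at hT
    obtain ⟨j, _, hTj⟩ := hT
    rw [nonShadow, Finset.mem_filter] at hTj
    exact hTj.2 F hF
  -- linear independence
  have hind : LinearIndependent ℝ (fun i : {x // x ∈ I} => v (↑i : Finset (Fin n))) := by
    rw [linearIndependent_iff']
    intro t g hg
    have heval : ∀ x : Finset (Fin n), ∑ i ∈ t, g i * v (↑i) x = 0 := by
      intro x
      have := congrFun hg x
      simpa [Finset.sum_apply] using this
    have hA1 : ∀ i ∈ t, (↑i : Finset (Fin n)) ∈ ℱ → g i = 0 := by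
      intro i hi hiF
      have h0 := heval ↑i
      have hsingle : ∑ i' ∈ t, g i' * v (↑i') (↑i) = g i * v (↑i) (↑i) := by
        refine Finset.sum_eq_single_of_mem i hi (fun i' hi' hne => ?_)
        have hcoene : (↑i' : Finset (Fin n)) ≠ ↑i := fun h => hne (Subtype.ext h)
        suffices hz : v (↑i') (↑i) = 0 by rw [hz, mul_zero]
        by_cases h' : (↑i' : Finset (Fin n)) ∈ ℱ
        · rw [hv]
          simp only [if_pos h', hf]
          exact hPzero _ (hint _ h' _ hiF hcoene)
        · have hiN : (↑i' : Finset (Fin n)) ∈ N := by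
            have h2 : (↑i' : Finset (Fin n)) ∈ ℱ ∪ N := i'.2
            exact (Finset.mem_union.1 h2).resolve_left h'
          rw [hv]
          simp only [if_neg h', he]
          exact if_neg (hNprop _ hiN _ hiF)
      have hvne : v (↑i) (↑i) ≠ 0 := by
        rw [hv]
        simp only [if_pos hiF, hf, Finset.inter_self]
        exact hPne _ (hℱK _ hiF)
      rw [hsingle] at h0
      exact (mul_eq_zero.mp h0).resolve_right hvne
    have hA2 : ∀ m : ℕ, ∀ i ∈ t, (↑i : Finset (Fin n)).card < m → g i = 0 := by
      intro m
      induction m with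
      | zero => intro i _ h; omega
      | succ m ih =>
        intro i hi hcard
        by_cases hiF : (↑i : Finset (Fin n)) ∈ ℱ
        · exact hA1 i hi hiF
        · have h0 := heval ↑i
          have hsingle : ∑ i' ∈ t, g i' * v (↑i') (↑i) = g i * v (↑i) (↑i) := by
            refine Finset.sum_eq_single_of_mem i hi (fun i' hi' hne => ?_)
            have hcoene : (↑i' : Finset (Fin n)) ≠ ↑i := fun h => hne (Subtype.ext h)
            by_cases h' : (↑i' : Finset (Fin n)) ∈ ℱ
            · rw [hA1 i' hi' h', zero_mul]
            · by_cases hsub : (↑i' : Finset (Fin n)) ⊆ ↑i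
              · have hlt : (↑i' : Finset (Fin n)).card < (↑i : Finset (Fin n)).card :=
                  Finset.card_lt_card (lt_of_le_of_ne hsub hcoene)
                rw [ih i' hi' (by omega), zero_mul]
              · have hz : v (↑i') (↑i) = 0 := by
                  rw [hv]
                  simp only [if_neg h', he]
                  exact if_neg hsub
                rw [hz, mul_zero]
          have hvone : v (↑i) (↑i) = 1 := by
            rw [hv]
            simp only [if_neg hiF, he]
            exact if_pos (subset_refl _)
          rw [hsingle, hvone, mul_one] at h0
          exact h0
    intro i hi
    by_cases hiF : (↑i : Finset (Fin n)) ∈ ℱ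
    · exact hA1 i hi hiF
    · exact hA2 ((↑i : Finset (Fin n)).card + 1) i hi (Nat.lt_succ_self _)
  -- dimension bound
  have hmain : I.card ≤ J.card := by
    have hw : LinearIndependent ℝ
        (fun i : {x // x ∈ I} => (⟨v ↑i, hvW ↑i i.2⟩ : W)) :=
      LinearIndependent.of_comp W.subtype hind
    have h1 : Fintype.card {x // x ∈ I} ≤ Module.finrank ℝ W :=
      hw.fintype_card_le_finrank
    have h2 : Module.finrank ℝ W ≤ (J.image e).card := finrank_span_finset_le_card _
    have h3 : (J.image e).card ≤ J.card := Finset.card_image_le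
    calc I.card = Fintype.card {x // x ∈ I} := (Fintype.card_coe I).symm
      _ ≤ Module.finrank ℝ W := h1
      _ ≤ (J.image e).card := h2
      _ ≤ J.card := h3
  -- cardinalities
  have hcardmem : ∀ j : ℕ, ∀ T ∈ nonShadow n j ℱ, T.card = j := by
    intro j T hT
    rw [nonShadow, Finset.mem_filter, Finset.mem_powersetCard] at hT
    exact hT.1.2
  have hJcard : J.card = ∑ j ∈ supp, n.choose j := by
    rw [hJ, Finset.card_biUnion]
    · refine Finset.sum_congr rfl (fun j _ => ?_)
      rw [Finset.card_powersetCard, Finset.card_univ, Fintype.card_fin]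
    · intro j hj j' hj' hne
      rw [Function.onFun, Finset.disjoint_left]
      intro T hT hT'
      rw [Finset.mem_powersetCard] at hT hT'
      exact hne (hT.2 ▸ hT'.2 ▸ rfl)
  have hIcard : I.card = ℱ.card + ∑ j ∈ supp, (nonShadow n j ℱ).card := by
    rw [hI, Finset.card_union_of_disjoint, hN, Finset.card_biUnion]
    · intro j hj j' hj' hne
      rw [Function.onFun, Finset.disjoint_left]
      intro T hT hT'
      exact hne ((hcardmem j T hT) ▸ (hcardmem j' T hT') ▸ rfl)
    · rw [Finset.disjoint_left]
      intro F hF hFN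
      exact hNprop F hFN F hF (subset_refl F)
  rw [← hJcard, ← hIcard]
  exact hmain
end
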